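/- arXiv:0706.2026 — 8 statements merged into one kernel-verified Lean document; each statement's English description precedes it below -/
import Mathlib

section
/- Let (X, Y) be an irreducible Weyl pair on a finite-dimensional complex vector space V, where q^2 is a primitive N-th root of unity. Then there exist nonzero complex numbers x and y such that X^N = x·Id_V and Y^N = y·Id_V, and the dimension of V over ℂ is exactly N. -/
open TensorProduct

noncomputable section

/-- ℂ^N: functions from ℤ/Nℤ to ℂ. -/
abbrev CN (N : ℕ) := ZMod N → ℂ

/-- The operator A with A e_k = q^{2k} e_k. -/
def opA (q : ℂ) (N : ℕ) : Module.End ℂ (CN N) where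
  toFun f := fun k => q ^ (2 * k.val) * f k
  map_add' f g := by funext k; simp [mul_add]
  map_smul' c f := by funext k; simp [smul_eq_mul]; ring

/-- The operator B with B e_k = e_{k+1}. -/
def opB (N : ℕ) : Module.End ℂ (CN N) where
  toFun f := fun k => f (k - 1)
  map_add' f g := by funext k; simp
  map_smul' c f := by funext k; simp

/-- The operator C with C e_k = q^{1-2k} e_{k-1}, i.e. (C f)(k) = q^{-1-2k} f(k+1). -/
def opC (q : ℂ) (N : ℕ) : Module.End ℂ (CN N) where
  toFun f := fun k => q ^ (-1 - 2 * (k.val : ℤ)) * f (k + 1)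
  map_add' f g := by funext k; simp [mul_add]
  map_smul' c f := by funext k; simp [smul_eq_mul]; ring

/-- A Weyl pair: invertible endomorphisms with X Y = q² Y X. -/
def IsWeylPair (q : ℂ) {V : Type*} [AddCommMonoid V] [Module ℂ V]
    (X Y : Module.End ℂ V) : Prop :=
  IsUnit X ∧ IsUnit Y ∧ X * Y = q ^ 2 • (Y * X)

/-- A subspace invariant under both X and Y. -/
def WeylInvariant {V : Type*} [AddCommMonoid V] [Module ℂ V]
    (X Y : Module.End ℂ V) (W : Submodule ℂ V) : Prop :=
  (∀ v ∈ W, X v ∈ W) ∧ (∀ v ∈ W, Y v ∈ W)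

/-- An irreducible Weyl pair. -/
def IsIrreducibleWeylPair (q : ℂ) {V : Type*} [AddCommMonoid V] [Module ℂ V]
    (X Y : Module.End ℂ V) : Prop :=
  IsWeylPair q X Y ∧ Nontrivial V ∧
    ∀ W : Submodule ℂ V, WeylInvariant X Y W → W = ⊥ ∨ W = ⊤

section Aux

variable {V : Type*} [AddCommGroup V] [Module ℂ V]

lemma weyl_unit_inj {T : Module.End ℂ V} (h : IsUnit T) : Function.Injective T := by
  intro a b hab
  have h1 : ((↑h.unit⁻¹ * T : Module.End ℂ V)) a = ((↑h.unit⁻¹ * T : Module.End ℂ V)) b := by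
    simp only [Module.End.mul_apply, hab]
  rwa [IsUnit.val_inv_mul, Module.End.one_apply, Module.End.one_apply] at h1

lemma weyl_pow_comm1 {q : ℂ} {X Y : Module.End ℂ V} (hcomm : X * Y = q ^ 2 • (Y * X)) :
    ∀ n : ℕ, X ^ n * Y = ((q ^ 2) ^ n) • (Y * X ^ n) := by
  intro n
  induction n with
  | zero => simp
  | succ n ih =>
    calc X ^ (n + 1) * Y = X ^ n * (X * Y) := by rw [pow_succ, mul_assoc]
      _ = X ^ n * (q ^ 2 • (Y * X)) := by rw [hcomm]
      _ = q ^ 2 • (X ^ n * Y * X) := by rw [mul_smul_comm, mul_assoc]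
      _ = q ^ 2 • ((((q ^ 2) ^ n) • (Y * X ^ n)) * X) := by rw [ih]
      _ = ((q ^ 2) ^ (n + 1)) • (Y * X ^ (n + 1)) := by
          rw [smul_mul_assoc, smul_smul, mul_assoc, ← pow_succ, ← pow_succ']

lemma weyl_pow_comm2 {q : ℂ} {X Y : Module.End ℂ V} (hcomm : X * Y = q ^ 2 • (Y * X)) :
    ∀ n : ℕ, X * Y ^ n = ((q ^ 2) ^ n) • (Y ^ n * X) := by
  intro n
  induction n with
  | zero => simp
  | succ n ih =>
    calc X * Y ^ (n + 1) = (X * Y) * Y ^ n := by rw [pow_succ', mul_assoc]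
      _ = q ^ 2 • (Y * (X * Y ^ n)) := by rw [hcomm, smul_mul_assoc, mul_assoc]
      _ = q ^ 2 • (Y * (((q ^ 2) ^ n) • (Y ^ n * X))) := by rw [ih]
      _ = ((q ^ 2) ^ (n + 1)) • (Y ^ (n + 1) * X) := by
          rw [mul_smul_comm, smul_smul, ← mul_assoc, ← pow_succ', ← pow_succ']

lemma weyl_scalar_of_comm [FiniteDimensional ℂ V] [Nontrivial V] (X Y T : Module.End ℂ V)
    (hirr : ∀ W : Submodule ℂ V, WeylInvariant X Y W → W = ⊥ ∨ W = ⊤)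
    (hTX : T * X = X * T) (hTY : T * Y = Y * T) :
    ∃ c : ℂ, T = c • 1 := by
  obtain ⟨μ, hμ⟩ := Module.End.exists_eigenvalue T
  refine ⟨μ, ?_⟩
  have hW : WeylInvariant X Y (T.eigenspace μ) := by
    constructor <;> intro v hv <;> rw [Module.End.mem_eigenspace_iff] at hv ⊢
    · have h1 := congrArg (fun f : Module.End ℂ V => f v) hTX
      simp only [Module.End.mul_apply] at h1
      rw [h1, hv, map_smul]
    · have h1 := congrArg (fun f : Module.End ℂ V => f v) hTY
      simp only [Module.End.mul_apply] at h1
      rw [h1, hv, map_smul]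
  rcases hirr _ hW with hbot | htop
  · exact absurd hbot hμ
  · ext v
    have hv : v ∈ T.eigenspace μ := htop ▸ Submodule.mem_top
    rw [Module.End.mem_eigenspace_iff] at hv
    simpa using hv

lemma weyl_scalar_ne_zero [Nontrivial V] {T : Module.End ℂ V} (h : IsUnit T) {c : ℂ}
    (hc : T = c • 1) : c ≠ 0 := by
  intro h0
  obtain ⟨v, hv⟩ := exists_ne (0 : V)
  apply hv
  apply weyl_unit_inj h
  rw [map_zero, hc, h0, zero_smul]
  rfl

end Aux

/-- an irreducible Weyl pair has scalar N-th powers and dimension N. -/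
theorem stmt1 (N : ℕ) (hN : 1 ≤ N) (q : ℂ) (hq : IsPrimitiveRoot (q ^ 2) N)
    (V : Type*) [AddCommGroup V] [Module ℂ V] [FiniteDimensional ℂ V]
    (X Y : Module.End ℂ V) (h : IsIrreducibleWeylPair q X Y) :
    ∃ x y : ℂ, x ≠ 0 ∧ y ≠ 0 ∧
      X ^ N = x • (1 : Module.End ℂ V) ∧ Y ^ N = y • (1 : Module.End ℂ V) ∧
      Module.finrank ℂ V = N := by
  obtain ⟨⟨hX, hY, hcomm⟩, hnt, hirr⟩ := h
  haveI := hnt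
  have hqN : (q ^ 2) ^ N = 1 := hq.pow_eq_one
  have hXNY : X ^ N * Y = Y * X ^ N := by rw [weyl_pow_comm1 hcomm N, hqN, one_smul]
  have hYNX : X * Y ^ N = Y ^ N * X := by rw [weyl_pow_comm2 hcomm N, hqN, one_smul]
  obtain ⟨x, hx⟩ := weyl_scalar_of_comm X Y (X ^ N) hirr
    (by rw [← pow_succ, ← pow_succ']) hXNY
  obtain ⟨y, hy⟩ := weyl_scalar_of_comm X Y (Y ^ N) hirr hYNX.symm
    (by rw [← pow_succ, ← pow_succ'])
  have hx0 : x ≠ 0 := weyl_scalar_ne_zero (hX.pow N) hx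
  have hy0 : y ≠ 0 := weyl_scalar_ne_zero (hY.pow N) hy
  refine ⟨x, y, hx0, hy0, hx, hy, ?_⟩
  -- dimension
  obtain ⟨lam, hlam⟩ := Module.End.exists_eigenvalue X
  obtain ⟨v, hvmem, hv0⟩ := hlam.exists_hasEigenvector
  rw [Module.End.mem_eigenspace_iff] at hvmem
  have hlam0 : lam ≠ 0 := by
    intro h0
    exact hv0 (weyl_unit_inj hX (by rw [hvmem, h0, zero_smul, map_zero]))
  set w : Fin N → V := fun k => (Y ^ (k : ℕ)) v with hw
  have hμinj : Function.Injective (fun k : Fin N => (q ^ 2) ^ (k : ℕ) * lam) := by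
    intro i j hij
    exact Fin.ext (hq.pow_inj i.isLt j.isLt (mul_right_cancel₀ hlam0 hij))
  have heig : ∀ k : Fin N, X.HasEigenvector ((q ^ 2) ^ (k : ℕ) * lam) (w k) := by
    intro k
    constructor
    · rw [Module.End.mem_eigenspace_iff]
      have h1 := congrArg (fun f : Module.End ℂ V => f v) (weyl_pow_comm2 hcomm (k : ℕ))
      simp only [Module.End.mul_apply, LinearMap.smul_apply] at h1
      show X ((Y ^ (k : ℕ)) v) = _
      rw [h1, hvmem, map_smul, smul_smul]
    · intro h0
      exact hv0 (weyl_unit_inj (hY.pow (k : ℕ)) (by rw [map_zero]; exact h0))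
  have hli := X.eigenvectors_linearIndependent'
    (fun k : Fin N => (q ^ 2) ^ (k : ℕ) * lam) hμinj w heig
  set W := Submodule.span ℂ (Set.range w) with hWdef
  have hWX : ∀ u ∈ W, X u ∈ W := by
    intro u hu
    have hsub : Set.range w ⊆ (W.comap X : Set V) := by
      rintro _ ⟨k, rfl⟩
      simp only [SetLike.mem_coe, Submodule.mem_comap]
      rw [Module.End.mem_eigenspace_iff.mp (heig k).1]
      exact W.smul_mem _ (Submodule.subset_span ⟨k, rfl⟩)
    exact Submodule.span_le.mpr hsub hu
  have hWY : ∀ u ∈ W, Y u ∈ W := by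
    intro u hu
    have hsub : Set.range w ⊆ (W.comap Y : Set V) := by
      rintro _ ⟨k, rfl⟩
      simp only [SetLike.mem_coe, Submodule.mem_comap]
      have hYw : Y (w k) = (Y ^ ((k : ℕ) + 1)) v := by
        rw [pow_succ']; rfl
      rcases eq_or_lt_of_le (Nat.succ_le_of_lt k.isLt) with heq | hlt
      · rw [hYw, show (k : ℕ) + 1 = N from heq, hy]
        have hv_mem : v ∈ W := Submodule.subset_span ⟨⟨0, hN⟩, by simp [hw]⟩
        simpa using W.smul_mem y hv_mem
      · rw [hYw]
        exact Submodule.subset_span ⟨⟨(k : ℕ) + 1, hlt⟩, rfl⟩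
    exact Submodule.span_le.mpr hsub hu
  have hWtop : W = ⊤ := by
    rcases hirr W ⟨hWX, hWY⟩ with hbot | htop
    · exfalso
      apply hv0
      have hv_mem : v ∈ W := Submodule.subset_span ⟨⟨0, hN⟩, by simp [hw]⟩
      rw [hbot] at hv_mem
      simpa using hv_mem
    · exact htop
  have b : Module.Basis (Fin N) ℂ V := Module.Basis.mk hli (by rw [← hWdef, hWtop])
  rw [Module.finrank_eq_card_basis b, Fintype.card_fin]

end
end

section
/- Let (X, Y) be an irreducible Weyl pair on a finite-dimensional complex vector space V, with X^N = x·Id_V and Y^N = y·Id_V for nonzero complex numbers x, y. Then for every pair of complex numbers u, v with u^N = x and v^N = y, there exists a linear isomorphism φ : V → ℂ^N such that φ∘X = (uA)∘φ and φ∘Y = (vB)∘φ. -/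
open TensorProduct

noncomputable section

/-- an irreducible Weyl pair with X^N = x·Id, Y^N = y·Id is isomorphic,
for every choice of N-th roots u, v of x, y, to the standard pair (uA, vB) on ℂ^N. -/
theorem stmt2 (N : ℕ) (hN : 1 ≤ N) (q : ℂ) (hq : IsPrimitiveRoot (q ^ 2) N)
    (V : Type*) [AddCommGroup V] [Module ℂ V] [FiniteDimensional ℂ V]
    (X Y : Module.End ℂ V) (h : IsIrreducibleWeylPair q X Y)
    (x y : ℂ) (hx : x ≠ 0) (hy : y ≠ 0)
    (hX : X ^ N = x • (1 : Module.End ℂ V)) (hY : Y ^ N = y • (1 : Module.End ℂ V)) :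
    ∀ u v : ℂ, u ^ N = x → v ^ N = y →
      ∃ φ : V ≃ₗ[ℂ] CN N, ∀ w : V,
        φ (X w) = (u • opA q N) (φ w) ∧ φ (Y w) = (v • opB N) (φ w) := by
  intro u v hu hv
  haveI : NeZero N := ⟨by omega⟩
  obtain ⟨⟨hXu, hYu, hcomm⟩, hnt, hirr⟩ := h
  haveI := hnt
  have hu0 : u ≠ 0 := fun h0 => hx (by rw [← hu, h0, zero_pow (by omega)])
  have hv0 : v ≠ 0 := fun h0 => hy (by rw [← hv, h0, zero_pow (by omega)])
  -- commutation rule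
  have hXYm : ∀ m : ℕ, X * Y ^ m = (q ^ 2) ^ m • (Y ^ m * X) := by
    intro m
    induction m with
    | zero => simp
    | succ m ih =>
      have hstep : X * Y ^ (m + 1) = (X * Y ^ m) * Y := by rw [pow_succ Y m, mul_assoc]
      rw [hstep, ih, smul_mul_assoc, mul_assoc, hcomm, mul_smul_comm, smul_smul,
        ← pow_succ (q ^ 2) m, pow_succ Y m, mul_assoc]
  -- injectivity of powers of Y
  have hYinj : ∀ m : ℕ, Function.Injective (Y ^ m : Module.End ℂ V) := by
    intro m
    obtain ⟨Z, hZ⟩ := (hYu.pow m).exists_left_inv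
    intro a b hab
    have : (Z * Y ^ m) a = (Z * Y ^ m) b := by simp [Module.End.mul_apply, hab]
    simpa [hZ] using this
  -- eigenvector of X
  obtain ⟨μ, hμ⟩ := Module.End.exists_eigenvalue X
  obtain ⟨w, hw⟩ := hμ.exists_hasEigenvector
  have hw0 : w ≠ 0 := hw.2
  have hμN : μ ^ N = x := by
    have h1 : (X ^ N) w = μ ^ N • w := hw.pow_apply N
    rw [hX] at h1
    have : (μ ^ N - x) • w = 0 := by
      rw [sub_smul, ← h1]; simp [LinearMap.smul_apply]
    rcases smul_eq_zero.mp this with h2 | h2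
    · exact sub_eq_zero.mp h2
    · exact absurd h2 hw0
  have hμ0 : μ ≠ 0 := fun h0 => hx (by rw [← hμN, h0, zero_pow (by omega)])
  -- μ / u is a power of q^2
  have hmu1 : (μ * u⁻¹) ^ N = 1 := by
    rw [mul_pow, hμN, inv_pow, hu, mul_inv_cancel₀ hx]
  obtain ⟨i, hiN, hi⟩ := hq.eq_pow_of_pow_eq_one hmu1
  -- rotate: w₀ has eigenvalue u
  set w₀ : V := (Y ^ (N - i)) w with hw₀def
  have hw₀0 : w₀ ≠ 0 := fun h0 => hw0 (hYinj (N - i) (by simpa using h0))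
  have hXw₀ : X w₀ = u • w₀ := by
    have h1 : X ((Y ^ (N - i)) w) = ((q ^ 2) ^ (N - i) • (Y ^ (N - i) * X)) w := by
      rw [← hXYm (N - i)]; rfl
    have h2 : ((q ^ 2) ^ (N - i) * μ) = u := by
      have hji : (q ^ 2) ^ (N - i) * (q ^ 2) ^ i = 1 := by
        rw [← pow_add, Nat.sub_add_cancel (le_of_lt hiN), hq.pow_eq_one]
      have h3 : (q ^ 2) ^ (N - i) * (μ * u⁻¹) = 1 := by rw [← hi, hji]
      calc (q ^ 2) ^ (N - i) * μ = (q ^ 2) ^ (N - i) * (μ * u⁻¹) * u := by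
            field_simp
        _ = u := by rw [h3, one_mul]
    calc X w₀ = (q ^ 2) ^ (N - i) • (Y ^ (N - i)) (X w) := by
              rw [hw₀def, h1]; simp [LinearMap.smul_apply, Module.End.mul_apply]
      _ = (q ^ 2) ^ (N - i) • (Y ^ (N - i)) (μ • w) := by rw [hw.apply_eq_smul]
      _ = ((q ^ 2) ^ (N - i) * μ) • w₀ := by rw [map_smul, smul_smul, hw₀def]
      _ = u • w₀ := by rw [h2]
  -- the basis family
  set b : ZMod N → V := fun k => (v⁻¹) ^ k.val • (Y ^ k.val) w₀ with hbdef
  have hXYmw : ∀ m : ℕ, X ((Y ^ m) w₀) = ((q ^ 2) ^ m * u) • (Y ^ m) w₀ := by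
    intro m
    have h1 : X ((Y ^ m) w₀) = ((q ^ 2) ^ m • (Y ^ m * X)) w₀ := by
      rw [← hXYm m]; rfl
    rw [h1]
    simp only [LinearMap.smul_apply, Module.End.mul_apply, hXw₀, map_smul, smul_smul]
  have hXb : ∀ k, X (b k) = (u * (q ^ 2) ^ k.val) • b k := by
    intro k
    simp only [hbdef, map_smul, hXYmw, smul_smul]
    ring_nf
  have hb0 : ∀ k, b k ≠ 0 := by
    intro k hk
    simp only [hbdef] at hk
    rcases smul_eq_zero.mp hk with h2 | h2
    · exact (pow_ne_zero _ (inv_ne_zero hv0)) h2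
    · exact hw₀0 (hYinj k.val (by simpa using h2))
  have hYb : ∀ k, Y (b k) = v • b (k + 1) := by
    intro k
    have hkval : (k + 1).val = (k.val + 1) % N := by
      rw [ZMod.val_add k 1, ZMod.val_one_eq_one_mod]
      rcases Nat.lt_or_ge 1 N with h1 | h1
      · rw [Nat.mod_eq_of_lt h1]
      · have hN1 : N = 1 := by omega
        subst hN1
        simp
    have hYbk : Y (b k) = (v⁻¹) ^ k.val • (Y ^ (k.val + 1)) w₀ := by
      simp only [hbdef, map_smul, pow_succ', Module.End.mul_apply]
    rcases Nat.lt_or_ge (k.val + 1) N with hlt | hge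
    · have : (k + 1).val = k.val + 1 := by rw [hkval, Nat.mod_eq_of_lt hlt]
      rw [hYbk, hbdef]
      simp only [this, smul_smul]
      congr 1
      rw [pow_succ', ← mul_assoc, mul_inv_cancel₀ hv0, one_mul]
    · have hNeq : k.val + 1 = N := by have := ZMod.val_lt k; omega
      have : (k + 1).val = 0 := by rw [hkval, hNeq, Nat.mod_self]
      rw [hYbk, hbdef]
      simp only [this, pow_zero, one_smul, pow_zero, hNeq, hY]
      rw [LinearMap.smul_apply, Module.End.one_apply, smul_smul, ← hv]
      congr 1
      have : k.val = N - 1 := by omega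
      rw [this]
      field_simp
      rw [show v ^ N = v ^ (N - 1) * v by rw [← pow_succ]; congr 1; omega, ← mul_assoc, ← mul_pow,
        one_div, inv_mul_cancel₀ hv0, one_pow, one_mul]
  -- eigenvector structure
  have heig : ∀ k : ZMod N, X.HasEigenvector (u * (q ^ 2) ^ k.val) (b k) := fun k =>
    ⟨Module.End.mem_eigenspace_iff.mpr (hXb k), hb0 k⟩
  have hinj : Function.Injective (fun k : ZMod N => u * (q ^ 2) ^ k.val) := by
    intro k l hkl
    simp only [] at hkl
    have h1 : (q ^ 2) ^ k.val = (q ^ 2) ^ l.val := mul_left_cancel₀ hu0 hkl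
    exact ZMod.val_injective N (hq.pow_inj (ZMod.val_lt k) (ZMod.val_lt l) h1)
  have hli : LinearIndependent ℂ b := X.eigenvectors_linearIndependent' _ hinj _ heig
  -- span is everything
  have hspan : Submodule.span ℂ (Set.range b) = ⊤ := by
    set W := Submodule.span ℂ (Set.range b) with hW
    have hmem : ∀ k, b k ∈ W := fun k => Submodule.subset_span ⟨k, rfl⟩
    have hinv : WeylInvariant X Y W := by
      constructor
      · intro z hz
        have : W ≤ W.comap X := by
          rw [hW, Submodule.span_le]
          rintro _ ⟨k, rfl⟩
          simp only [Submodule.mem_comap, SetLike.mem_coe]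
          rw [hXb k]
          exact W.smul_mem _ (hmem k)
        exact this hz
      · intro z hz
        have : W ≤ W.comap Y := by
          rw [hW, Submodule.span_le]
          rintro _ ⟨k, rfl⟩
          simp only [Submodule.mem_comap, SetLike.mem_coe]
          rw [hYb k]
          exact W.smul_mem _ (hmem (k + 1))
        exact this hz
    rcases hirr W hinv with hbot | htop
    · exact absurd (hbot ▸ hmem 0) (by simpa using hb0 0)
    · exact htop
  -- build basis and iso
  let B : Module.Basis (ZMod N) ℂ V := Module.Basis.mk hli (by rw [hspan])
  have hB : ∀ k, B k = b k := fun k => Module.Basis.mk_apply hli _ k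
  refine ⟨B.equivFun, ?_⟩
  have hrep : ∀ i k, B.equivFun (B i) k = if i = k then 1 else 0 := by
    intro i k
    rw [Module.Basis.equivFun_apply, Module.Basis.repr_self]
    exact Finsupp.single_apply
  have key : ∀ (T : Module.End ℂ V) (S : Module.End ℂ (CN N)),
      (∀ i, B.equivFun (T (B i)) = S (B.equivFun (B i))) →
      ∀ w : V, B.equivFun (T w) = S (B.equivFun w) := by
    intro T S hTS w
    have : (B.equivFun.toLinearMap ∘ₗ T) = (S ∘ₗ B.equivFun.toLinearMap) :=
      Module.Basis.ext B (fun i => hTS i)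
    exact LinearMap.congr_fun this w
  intro w
  constructor
  · refine key X (u • opA q N) (fun i => ?_) w
    have hgoal : X (B i) = (u * (q ^ 2) ^ i.val) • B i := by rw [hB i]; exact hXb i
    rw [hgoal, map_smul]
    funext k
    simp only [Pi.smul_apply, LinearMap.smul_apply, smul_eq_mul, hrep]
    show (u * (q ^ 2) ^ i.val) * _ = u * ((opA q N) (B.equivFun (B i)) k)
    simp only [opA, LinearMap.coe_mk, AddHom.coe_mk, hrep]
    by_cases hik : i = k
    · subst hik
      simp [pow_mul, mul_comm]
    · simp [hik]
  · refine key Y (v • opB N) (fun i => ?_) w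
    have hgoal : Y (B i) = v • B (i + 1) := by rw [hB i, hB (i + 1)]; exact hYb i
    rw [hgoal, map_smul]
    funext k
    simp only [Pi.smul_apply, LinearMap.smul_apply, smul_eq_mul, hrep]
    show v * _ = v * ((opB N) (B.equivFun (B i)) k)
    simp only [opB, LinearMap.coe_mk, AddHom.coe_mk, hrep]
    congr 1
    by_cases hik : i + 1 = k
    · have : i = k - 1 := by rw [← hik]; ring
      simp [hik, this]
    · have : ¬ (i = k - 1) := fun hc => hik (by rw [hc]; ring)
      simp [hik, this]

end
end

section
/- Let R be an associative ℂ-algebra with unit, let N ≥ 1 be an integer, let ζ ∈ ℂ be a primitive N-th root of unity, and let P, Q ∈ R satisfy QP = ζ·PQ. Then (P + Q)^N = P^N + Q^N. -/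
/-- q-binomial coefficients via the Pascal recursion matching `(P+Q)^n` expansion. -/
def qc (ζ : ℂ) : ℕ → ℕ → ℂ
  | 0, 0 => 1
  | 0, _+1 => 0
  | n+1, 0 => qc ζ n 0
  | n+1, k+1 => ζ^(n-k) * qc ζ n k + qc ζ n (k+1)

lemma qc_zero (ζ : ℂ) : ∀ n, qc ζ n 0 = 1
  | 0 => rfl
  | n+1 => by rw [qc, qc_zero ζ n]

lemma qc_gt (ζ : ℂ) : ∀ n k, n < k → qc ζ n k = 0
  | 0, _+1, _ => rfl
  | n+1, k+1, h => by
      rw [qc, qc_gt ζ n k (by omega), qc_gt ζ n (k+1) (by omega)]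
      ring

lemma qc_diag (ζ : ℂ) : ∀ n, qc ζ n n = 1
  | 0 => rfl
  | n+1 => by rw [qc, qc_diag ζ n, qc_gt ζ n (n+1) (by omega)]; simp

/-- the balanced identity. -/
lemma qc_bal (ζ : ℂ) : ∀ n k,
    (ζ^(n-k) - 1) * qc ζ n k = (ζ^(k+1) - 1) * qc ζ n (k+1) := by
  intro n
  induction n with
  | zero =>
    intro k
    match k with
    | 0 => simp [qc]
    | k+1 => simp [qc]
  | succ n ih =>
    intro k
    match k with
    | 0 =>
      have h0 := ih 0
      rw [qc_zero] at h0 ⊢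
      show (ζ^(n+1) - 1) * 1 = (ζ^(0+1) - 1) * qc ζ (n+1) 1
      rw [show (1:ℕ) = 0 + 1 from rfl, qc, qc_zero]
      rw [Nat.sub_zero] at h0 ⊢
      linear_combination h0
    | k+1 =>
      by_cases hk : n ≤ k
      · have h1 : n + 1 - (k+1) = 0 := by omega
        rw [h1, qc_gt ζ (n+1) (k+1+1) (by omega)]
        ring
      · -- k < n
        set b := n - (k+1) with hbdef
        have hb1 : n - k = b + 1 := by omega
        have hb2 : n + 1 - (k + 1) = b + 1 := by omega
        have hD1 := ih k
        have hD2 := ih (k+1)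
        rw [hb1] at hD1
        rw [← hbdef] at hD2
        rw [hb2, qc, qc, hb1, ← hbdef]
        linear_combination ζ^(b+1) * hD1 + hD2

lemma qc_vanish (ζ : ℂ) (N : ℕ) (hζ : IsPrimitiveRoot ζ N) :
    ∀ k, 0 < k → k < N → qc ζ N k = 0 := by
  intro k hk0 hkN
  obtain ⟨m, rfl⟩ : ∃ m, N = m + 1 := ⟨N - 1, by omega⟩
  obtain ⟨j, rfl⟩ : ∃ j, k = j + 1 := ⟨k - 1, by omega⟩
  have hD := qc_bal ζ m j
  have hpow : ζ^(m-j) * ζ^(j+1) = 1 := by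
    rw [← pow_add, show m - j + (j+1) = m + 1 by omega]
    exact hζ.pow_eq_one
  have hne : ζ^(j+1) - 1 ≠ 0 := by
    refine sub_ne_zero.mpr ?_
    exact hζ.pow_ne_one_of_pos_of_lt (by omega) (by omega)
  have key : (ζ^(j+1) - 1) * qc ζ (m+1) (j+1) = 0 := by
    rw [qc]
    linear_combination (-1 : ℂ) * hD + (qc ζ m j) * hpow
  exact (mul_eq_zero.mp key).resolve_left hne

section Expand

variable {R : Type*} [Ring R] [Algebra ℂ R] (ζ : ℂ) (P Q : R)
  (hPQ : Q * P = ζ • (P * Q))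

include hPQ

lemma qpow : ∀ m : ℕ, Q^m * P = (ζ^m) • (P * Q^m)
  | 0 => by simp
  | m+1 => by
      rw [pow_succ, mul_assoc, hPQ, mul_smul_comm, ← mul_assoc,
        qpow m, smul_mul_assoc, smul_smul, mul_assoc, ← pow_succ, ← pow_succ']

lemma qterm (k m : ℕ) : (P^k * Q^m) * P = (ζ^m) • (P^(k+1) * Q^m) := by
  rw [mul_assoc, qpow ζ P Q hPQ m, mul_smul_comm, ← mul_assoc, ← pow_succ]

lemma qexpand : ∀ n : ℕ,
    (P + Q)^n = ∑ k ∈ Finset.range (n+1), qc ζ n k • (P^k * Q^(n-k)) := by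
  intro n
  induction n with
  | zero => simp [qc]
  | succ n ih =>
    rw [pow_succ, ih, Finset.sum_mul]
    have hterm : ∀ k,
        (qc ζ n k • (P^k * Q^(n-k))) * (P + Q)
          = (ζ^(n-k) * qc ζ n k) • (P^(k+1) * Q^(n-k))
            + qc ζ n k • (P^k * Q^(n-k+1)) := by
      intro k
      rw [mul_add, smul_mul_assoc, qterm ζ P Q hPQ, smul_smul, mul_comm (qc ζ n k),
        smul_mul_assoc, mul_assoc, ← pow_succ]
    rw [Finset.sum_congr rfl (fun k _ => hterm k), Finset.sum_add_distrib]
    rw [Finset.sum_range_succ' (fun k => qc ζ (n+1) k • (P^k * Q^(n+1-k)))]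
    have h1 : ∀ k ∈ Finset.range (n+1),
        qc ζ (n+1) (k+1) • (P^(k+1) * Q^(n+1-(k+1)))
          = (ζ^(n-k) * qc ζ n k) • (P^(k+1) * Q^(n-k))
            + qc ζ n (k+1) • (P^(k+1) * Q^(n-k)) := by
      intro k _
      rw [show n+1-(k+1) = n-k by omega, qc, add_smul]
    rw [Finset.sum_congr rfl h1, Finset.sum_add_distrib]
    have hS2 : ∑ k ∈ Finset.range (n+1), qc ζ n k • (P^k * Q^(n-k+1))
        = (∑ k ∈ Finset.range (n+1), qc ζ n (k+1) • (P^(k+1) * Q^(n-k)))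
          + qc ζ (n+1) 0 • (P^0 * Q^(n+1-0)) := by
      rw [Finset.sum_range_succ' (fun k => qc ζ n k • (P^k * Q^(n-k+1)))]
      rw [Finset.sum_range_succ (fun k => qc ζ n (k+1) • (P^(k+1) * Q^(n-k)))]
      rw [qc_gt ζ n (n+1) (by omega), zero_smul, add_zero]
      have e1 : ∀ k ∈ Finset.range n,
          qc ζ n (k+1) • (P^(k+1) * Q^(n-(k+1)+1))
            = qc ζ n (k+1) • (P^(k+1) * Q^(n-k)) := by
        intro k hk
        rw [Finset.mem_range] at hk
        rw [show n-(k+1)+1 = n-k by omega]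
      rw [Finset.sum_congr rfl e1, qc_zero, qc_zero,
        show n-0+1 = n+1-0 by omega]
    rw [hS2]
    abel

end Expand

/-- if ζ is a primitive N-th root of unity and Q P = ζ·P Q in an
associative unital ℂ-algebra, then (P + Q)^N = P^N + Q^N. -/
theorem stmt4 (R : Type*) [Ring R] [Algebra ℂ R] (N : ℕ) (hN : 1 ≤ N)
    (ζ : ℂ) (hζ : IsPrimitiveRoot ζ N) (P Q : R) (hPQ : Q * P = ζ • (P * Q)) :
    (P + Q) ^ N = P ^ N + Q ^ N := by
  rw [qexpand ζ P Q hPQ N, Finset.sum_range_succ]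
  have hmid : ∑ k ∈ Finset.range N, qc ζ N k • (P^k * Q^(N-k))
      = qc ζ N 0 • (P^0 * Q^(N-0)) := by
    apply Finset.sum_eq_single_of_mem 0 (Finset.mem_range.mpr (by omega))
    intro b hb hb0
    rw [Finset.mem_range] at hb
    rw [qc_vanish ζ N hζ b (by omega) hb, zero_smul]
  rw [hmid, qc_zero, qc_diag]
  simp [add_comm]
end

section
/- Let μ = (uA, vB) and ν = (u′A, v′B) be standard Weyl pairs on ℂ^N, with x_μ = u^N, y_μ = v^N, x_ν = u′^N, y_ν = v′^N. Then the endomorphisms 𝕏 = X_μ⊗X_ν and 𝕐 = X_μ^{-1}⊗Y_ν + Y_μ⊗Id of ℂ^N ⊗ ℂ^N satisfy 𝕏𝕐 = q^2·𝕐𝕏, 𝕏 is invertible, 𝕏^N = (x_μ·x_ν)·Id and 𝕐^N = (x_μ^{-1}·y_ν + y_μ)·Id; in particular, if x_μ^{-1}·y_ν + y_μ ≠ 0, then 𝕐 is invertible and (𝕏, 𝕐) is a Weyl pair on ℂ^N ⊗ ℂ^N. -/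
open TensorProduct

noncomputable section

/-! ### Auxiliary lemmas -/

open Polynomial Finset in
lemma hsign_lemma {N : ℕ} (hN : 1 ≤ N) {ζ : ℂ} (hζ : IsPrimitiveRoot ζ N) :
    ζ ^ (∑ i ∈ range N, i) = -(-1 : ℂ) ^ N := by
  rcases Nat.even_or_odd N with ⟨m, hm⟩ | ⟨m, hm⟩
  · -- N = 2m (even), m ≥ 1
    obtain ⟨k, rfl⟩ : ∃ k, m = k + 1 := ⟨m - 1, by omega⟩
    have hS : (∑ i ∈ range N, i) = (k + 1) * (2 * k + 1) := by
      have h2 := Finset.sum_range_id_mul_two N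
      have h3 : N * (N - 1) = ((k + 1) * (2 * k + 1)) * 2 := by
        subst hm
        have h5 : k + 1 + (k + 1) - 1 = 2 * k + 1 := by omega
        rw [h5]; ring
      exact Nat.eq_of_mul_eq_mul_right (by norm_num : 0 < 2) (by rw [h2, h3])
    have ha2 : (ζ ^ (k+1)) ^ 2 = 1 := by
      rw [← pow_mul]
      have h4 : (k+1) * 2 = N := by omega
      rw [h4, hζ.pow_eq_one]
    have ha : ζ ^ (k+1) = -1 := by
      have h0 : (ζ ^ (k+1) - 1) * (ζ ^ (k+1) + 1) = 0 := by linear_combination ha2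
      rcases mul_eq_zero.1 h0 with h | h
      · exact absurd (sub_eq_zero.1 h) (hζ.pow_ne_one_of_pos_of_lt (by omega) (by omega))
      · exact eq_neg_of_add_eq_zero_left h
    have hodd : Odd (2 * k + 1) := ⟨k, by omega⟩
    have heven : Even N := ⟨k + 1, by omega⟩
    rw [hS, pow_mul, ha, hodd.neg_one_pow, heven.neg_one_pow]
    try norm_num
  · -- N = 2m+1 (odd)
    have hS : (∑ i ∈ range N, i) = N * m := by
      have h2 := Finset.sum_range_id_mul_two N
      have h3 : N * (N - 1) = (N * m) * 2 := by
        subst hm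
        have h5 : 2 * m + 1 - 1 = 2 * m := by omega
        rw [h5]; ring
      exact Nat.eq_of_mul_eq_mul_right (by norm_num : 0 < 2) (by rw [h2, h3])
    have hodd : Odd N := ⟨m, hm⟩
    rw [hS, pow_mul, hζ.pow_eq_one, one_pow, hodd.neg_one_pow]
    norm_num

open Polynomial Finset in
lemma hroots_lemma {N : ℕ} (hN : 1 ≤ N) {ζ : ℂ} (hζ : IsPrimitiveRoot ζ N) (s : ℂ) :
    ∏ i ∈ range N, (s - ζ ^ i) = s ^ N - 1 := by
  have h := congrArg (Polynomial.eval s) (X_pow_sub_C_eq_prod hζ (by omega) (one_pow N))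
  simpa [eval_prod] using h.symm

open Polynomial Finset in
lemma scal_lemma {N : ℕ} (hN : 1 ≤ N) {ζ : ℂ} (hζ : IsPrimitiveRoot ζ N) (t : ℂ) :
    ∏ i ∈ range N, (1 + ζ ^ i * t) = 1 + ζ ^ (∑ i ∈ range N, i) * t ^ N := by
  rcases eq_or_ne t 0 with rfl | ht
  · simp [zero_pow (by omega : N ≠ 0)]
  · have hf : ∀ i ∈ range N, 1 + ζ ^ i * t = (-t) * ((-t⁻¹) - ζ ^ i) := by
      intro i _; field_simp; ring
    rw [Finset.prod_congr rfl hf, Finset.prod_mul_distrib, Finset.prod_const, card_range,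
      hroots_lemma hN hζ (-t⁻¹), hsign_lemma hN hζ]
    have h1 : (-t) * (-t⁻¹) = 1 := by field_simp
    rw [mul_sub, ← mul_pow, h1, one_pow, mul_one, neg_pow]
    ring

open Polynomial Finset in
lemma pid_lemma {N : ℕ} (hN : 1 ≤ N) {ζ : ℂ} (hζ : IsPrimitiveRoot ζ N) :
    ∏ i ∈ range N, (1 + C (ζ ^ i) * X) =
      1 + C (ζ ^ (∑ i ∈ range N, i)) * X ^ N := by
  apply Polynomial.funext
  intro t
  simpa [eval_prod] using scal_lemma hN hζ t

lemma list_prod_range' {M : Type*} [CommMonoid M] (g : ℕ → M) (n : ℕ) :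
    ((List.range n).map g).prod = ∏ i ∈ Finset.range n, g i := by
  induction n with
  | zero => simp
  | succ n ih => simp [List.range_succ, Finset.prod_range_succ, ih]

open Polynomial Finset in
/-- The key q-binomial fact: if `x y = ζ • (y x)` with `ζ` a primitive `N`-th root of
unity and `x` invertible, then `(x + y) ^ N = x ^ N + y ^ N`. -/
lemma q_pow_add {R : Type*} [Ring R] [Algebra ℂ R] {N : ℕ} (hN : 1 ≤ N) {ζ : ℂ}
    (hζ : IsPrimitiveRoot ζ N) {x y : R} (hx : IsUnit x)
    (h : x * y = ζ • (y * x)) : (x + y) ^ N = x ^ N + y ^ N := by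
  obtain ⟨U, rfl⟩ := hx
  set x : R := (U : R) with hxdef
  set w : R := ((U⁻¹ : Rˣ) : R) with hwdef
  have hxw : x * w = 1 := U.mul_inv
  have hwx : w * x = 1 := U.inv_mul
  set z : R := y * w with hzdef
  have hzx : z * x = y := by rw [hzdef, mul_assoc, hwx, mul_one]
  have hxz : x * z = ζ • (z * x) := by
    rw [hzdef, ← mul_assoc, h, smul_mul_assoc, mul_assoc, hxw, mul_one, hzx]
  have hyw : y * w = ζ • (w * y) := by
    have h1 : w * (x * y) * w = w * (ζ • (y * x)) * w := by rw [h]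
    calc y * w = w * (x * y) * w := by rw [← mul_assoc w x y, hwx, one_mul]
    _ = ζ • (w * y) := by
        rw [h1, mul_smul_comm, smul_mul_assoc, ← mul_assoc w y x, mul_assoc (w*y) x w,
          hxw, mul_one]
  have hywn : ∀ n : ℕ, y * w ^ n = ζ ^ n • (w ^ n * y) := by
    intro n
    induction n with
    | zero => simp
    | succ n ih =>
      calc y * w ^ (n + 1) = (y * w) * w ^ n := by rw [pow_succ', ← mul_assoc]
      _ = ζ • ((w * y) * w ^ n) := by rw [hyw, smul_mul_assoc]
      _ = ζ • (w * (ζ ^ n • (w ^ n * y))) := by rw [mul_assoc, ih]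
      _ = ζ ^ (n + 1) • (w ^ (n + 1) * y) := by
          rw [mul_smul_comm, smul_smul, pow_succ' ζ, pow_succ' w, mul_assoc]
  have hx1z : ∀ n : ℕ, x ^ n * (1 + z) = (1 + ζ ^ n • z) * x ^ n := by
    intro n
    induction n with
    | zero => simp
    | succ n ih =>
      calc x ^ (n + 1) * (1 + z) = x * (x ^ n * (1 + z)) := by rw [pow_succ', mul_assoc]
      _ = x * ((1 + ζ ^ n • z) * x ^ n) := by rw [ih]
      _ = (x * (1 + ζ ^ n • z)) * x ^ n := by rw [mul_assoc]
      _ = (1 + ζ ^ (n + 1) • z) * x ^ (n + 1) := by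
          have : x * (1 + ζ ^ n • z) = (1 + ζ ^ (n + 1) • z) * x := by
            rw [mul_add, mul_one, add_mul, one_mul, mul_smul_comm, hxz, smul_smul,
              ← pow_succ, smul_mul_assoc]
          rw [this, mul_assoc, ← pow_succ']
  have key1 : ∀ n : ℕ, ((1 + z) * x) ^ n =
      ((List.range n).map (fun i => 1 + ζ ^ i • z)).prod * x ^ n := by
    intro n
    induction n with
    | zero => simp
    | succ n ih =>
      rw [pow_succ, ih, List.range_succ, List.map_append, List.prod_append,
        List.map_singleton, List.prod_singleton]
      calc (((List.range n).map (fun i => 1 + ζ ^ i • z)).prod * x ^ n) * ((1 + z) * x)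
          = ((List.range n).map (fun i => 1 + ζ ^ i • z)).prod * ((x ^ n * (1 + z)) * x) := by
            rw [mul_assoc, mul_assoc]
      _ = ((List.range n).map (fun i => 1 + ζ ^ i • z)).prod * ((1 + ζ ^ n • z) * x ^ (n + 1)) := by
            rw [hx1z n, mul_assoc, ← pow_succ]
      _ = (((List.range n).map (fun i => 1 + ζ ^ i • z)).prod * (1 + ζ ^ n • z)) * x ^ (n + 1) := by
            rw [mul_assoc]
  have key2 : ((List.range N).map (fun i => 1 + ζ ^ i • z)).prod
      = 1 + ζ ^ (∑ i ∈ range N, i) • z ^ N := by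
    have h1 := congrArg (Polynomial.aeval z) (pid_lemma hN hζ)
    have h2 : (Polynomial.aeval z) (∏ i ∈ range N, (1 + C (ζ ^ i) * X))
        = ((List.range N).map (fun i => 1 + ζ ^ i • z)).prod := by
      rw [← list_prod_range' (fun i => 1 + C (ζ ^ i) * X) N]
      rw [map_list_prod (Polynomial.aeval z : ℂ[X] →ₐ[ℂ] R)
        ((List.range N).map (fun i => 1 + C (ζ ^ i) * X)), List.map_map]
      congr 1
      apply List.map_congr_left
      intro i _
      simp [Algebra.smul_def]
    have h3 : (Polynomial.aeval z) (1 + C (ζ ^ (∑ i ∈ range N, i)) * X ^ N)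
        = 1 + ζ ^ (∑ i ∈ range N, i) • z ^ N := by
      simp [Algebra.smul_def]
    rw [h2, h3] at h1
    exact h1
  have key3 : ∀ n : ℕ, ζ ^ (∑ i ∈ range n, i) • z ^ n = y ^ n * w ^ n := by
    intro n
    induction n with
    | zero => simp
    | succ n ih =>
      calc ζ ^ (∑ i ∈ range (n+1), i) • z ^ (n+1)
          = (ζ ^ (∑ i ∈ range n, i) • z ^ n) * (ζ ^ n • z) := by
            rw [Finset.sum_range_succ, pow_add, pow_succ, smul_mul_smul_comm]
      _ = (y ^ n * w ^ n) * ((ζ ^ n • y) * w) := by rw [ih, hzdef, smul_mul_assoc]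
      _ = y ^ n * ((w ^ n * (ζ ^ n • y)) * w) := by rw [mul_assoc, ← mul_assoc (w ^ n)]
      _ = y ^ n * ((y * w ^ n) * w) := by rw [mul_smul_comm, ← hywn n]
      _ = y ^ (n + 1) * w ^ (n + 1) := by
            rw [mul_assoc y (w ^ n) w, ← mul_assoc (y ^ n) y, ← pow_succ, ← pow_succ]
  have hwxN : w ^ N * x ^ N = 1 := by
    have hc : Commute w x := by unfold Commute SemiconjBy; rw [hwx, hxw]
    rw [← hc.mul_pow, hwx, one_pow]
  have hfinal : (1 + z) * x = x + y := by rw [add_mul, one_mul, hzx]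
  calc (x + y) ^ N = ((1 + z) * x) ^ N := by rw [hfinal]
  _ = (1 + ζ ^ (∑ i ∈ range N, i) • z ^ N) * x ^ N := by rw [key1 N, key2]
  _ = x ^ N + (y ^ N * w ^ N) * x ^ N := by rw [add_mul, one_mul, key3 N]
  _ = x ^ N + y ^ N := by rw [mul_assoc, hwxN, mul_one]

lemma aux_isUnit_of_pow {R : Type*} [Ring R] [Algebra ℂ R] {a : R} {c : ℂ} {n : ℕ}
    (hn : n ≠ 0) (hc : c ≠ 0) (h : a ^ n = c • 1) : IsUnit a := by
  obtain ⟨m, rfl⟩ := Nat.exists_eq_succ_of_ne_zero hn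
  refine ⟨⟨a, c⁻¹ • a ^ m, ?_, ?_⟩, rfl⟩
  · rw [mul_smul_comm, ← pow_succ', h, smul_smul, inv_mul_cancel₀ hc, one_smul]
  · rw [smul_mul_assoc, ← pow_succ, h, smul_smul, inv_mul_cancel₀ hc, one_smul]

section ops
variable {N : ℕ} [NeZero N] {q : ℂ} (hq : IsPrimitiveRoot (q ^ 2) N)

set_option linter.unusedSectionVars false

lemma opA_pow_apply (q : ℂ) (n : ℕ) (f : CN N) (k : ZMod N) :
    ((opA q N ^ n) f) k = ((q ^ 2) ^ k.val) ^ n * f k := by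
  induction n with
  | zero => simp
  | succ n ih =>
    rw [pow_succ' (opA q N) n, Module.End.mul_apply]
    show q ^ (2 * k.val) * ((opA q N ^ n) f) k = _
    rw [ih, pow_mul, pow_succ']
    ring

lemma opB_pow_apply (n : ℕ) (f : CN N) (k : ZMod N) :
    ((opB N ^ n) f) k = f (k - n) := by
  induction n generalizing f k with
  | zero => simp
  | succ n ih =>
    rw [pow_succ (opB N) n, Module.End.mul_apply]
    show ((opB N ^ n) (opB N f)) k = _
    rw [ih]
    show f (k - n - 1) = f (k - (n + 1 : ℕ))
    congr 1
    push_cast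
    ring

include hq in
lemma opA_pow_N : opA q N ^ N = 1 := by
  apply LinearMap.ext; intro f; funext k
  rw [opA_pow_apply, ← pow_mul, mul_comm (k.val) N, pow_mul, hq.pow_eq_one, one_pow, one_mul]
  rfl

lemma opB_pow_N : opB N ^ N = 1 := by
  apply LinearMap.ext; intro f; funext k
  rw [opB_pow_apply]
  simp

include hq in
lemma opA_mul_opB : opA q N * opB N = q ^ 2 • (opB N * opA q N) := by
  apply LinearMap.ext; intro f; funext k
  show q ^ (2 * k.val) * f (k - 1) = q ^ 2 * (q ^ (2 * (k - 1).val) * f (k - 1))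
  have hval : ∀ j : ZMod N, (q ^ 2) ^ ((j + 1).val) = (q ^ 2) ^ (j.val) * q ^ 2 := by
    intro j
    rw [ZMod.val_add, ← pow_eq_pow_mod _ hq.pow_eq_one, pow_add, ZMod.val_one_eq_one_mod,
      ← pow_eq_pow_mod _ hq.pow_eq_one, pow_one]
  have key : q ^ (2 * k.val) = q ^ 2 * q ^ (2 * (k - 1).val) := by
    have h1 : ∀ m : ℕ, q ^ (2 * m) = (q ^ 2) ^ m := fun m => by rw [pow_mul]
    have h3 := hval (k - 1)
    have h4 : k - 1 + 1 = k := by ring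
    rw [h4] at h3
    rw [h1, h1, h3, mul_comm]
  rw [key]; ring

end ops

/-- for standard Weyl pairs μ = (uA, vB) and ν = (u′A, v′B), the
operators 𝕏 = X_μ⊗X_ν and 𝕐 = X_μ⁻¹⊗Y_ν + Y_μ⊗Id on ℂ^N ⊗ ℂ^N satisfy
𝕏𝕐 = q²𝕐𝕏, 𝕏 is invertible, 𝕏^N = x_μx_ν·Id, 𝕐^N = (x_μ⁻¹y_ν + y_μ)·Id, and if
x_μ⁻¹y_ν + y_μ ≠ 0 then 𝕐 is invertible and (𝕏,𝕐) is a Weyl pair. -/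
theorem stmt5 (N : ℕ) (hN : 1 ≤ N) (q : ℂ) (hq : IsPrimitiveRoot (q ^ 2) N)
    (u v u' v' : ℂ) (hu : u ≠ 0) (hv : v ≠ 0) (hu' : u' ≠ 0) (hv' : v' ≠ 0) :
    let Xμ : Module.End ℂ (CN N) := u • opA q N
    let Yμ : Module.End ℂ (CN N) := v • opB N
    let Xν : Module.End ℂ (CN N) := u' • opA q N
    let Yν : Module.End ℂ (CN N) := v' • opB N
    let 𝕏 : Module.End ℂ (CN N ⊗[ℂ] CN N) := TensorProduct.map Xμ Xν
    let 𝕐 : Module.End ℂ (CN N ⊗[ℂ] CN N) :=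
      TensorProduct.map (Ring.inverse Xμ) Yν + TensorProduct.map Yμ 1
    𝕏 * 𝕐 = q ^ 2 • (𝕐 * 𝕏) ∧ IsUnit 𝕏 ∧
    𝕏 ^ N = (u ^ N * u' ^ N) • (1 : Module.End ℂ (CN N ⊗[ℂ] CN N)) ∧
    𝕐 ^ N = ((u ^ N)⁻¹ * v' ^ N + v ^ N) • (1 : Module.End ℂ (CN N ⊗[ℂ] CN N)) ∧
    ((u ^ N)⁻¹ * v' ^ N + v ^ N ≠ 0 → IsUnit 𝕐 ∧ IsWeylPair q 𝕏 𝕐) := by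
  haveI : NeZero N := ⟨by omega⟩
  intro Xμ Yμ Xν Yν 𝕏 𝕐
  have hXμN : Xμ ^ N = (u ^ N) • 1 := by
    show (u • opA q N) ^ N = _
    rw [smul_pow, opA_pow_N hq]
  have hYμN : Yμ ^ N = (v ^ N) • 1 := by
    show (v • opB N) ^ N = _
    rw [smul_pow, opB_pow_N]
  have hXνN : Xν ^ N = (u' ^ N) • 1 := by
    show (u' • opA q N) ^ N = _
    rw [smul_pow, opA_pow_N hq]
  have hYνN : Yν ^ N = (v' ^ N) • 1 := by
    show (v' • opB N) ^ N = _
    rw [smul_pow, opB_pow_N]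
  have hXμu : IsUnit Xμ := aux_isUnit_of_pow (by omega) (pow_ne_zero N hu) hXμN
  have hXYμ : Xμ * Yμ = q ^ 2 • (Yμ * Xμ) := by
    show (u • opA q N) * (v • opB N) = q ^ 2 • ((v • opB N) * (u • opA q N))
    rw [smul_mul_smul_comm, smul_mul_smul_comm, opA_mul_opB hq, smul_smul, smul_smul]
    congr 1
    ring
  have hXYν : Xν * Yν = q ^ 2 • (Yν * Xν) := by
    show (u' • opA q N) * (v' • opB N) = q ^ 2 • ((v' • opB N) * (u' • opA q N))
    rw [smul_mul_smul_comm, smul_mul_smul_comm, opA_mul_opB hq, smul_smul, smul_smul]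
    congr 1
    ring
  have hXI : Xμ * Ring.inverse Xμ = 1 := Ring.mul_inverse_cancel _ hXμu
  have hIX : Ring.inverse Xμ * Xμ = 1 := Ring.inverse_mul_cancel _ hXμu
  set I : Module.End ℂ (CN N) := Ring.inverse Xμ with hIdef
  have hYI : Yμ * I = q ^ 2 • (I * Yμ) := by
    have h1 : I * (Xμ * Yμ) * I = I * (q ^ 2 • (Yμ * Xμ)) * I := by rw [hXYμ]
    calc Yμ * I = I * (Xμ * Yμ) * I := by rw [← mul_assoc I Xμ Yμ, hIX, one_mul]
    _ = q ^ 2 • (I * Yμ) := by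
        rw [h1, mul_smul_comm, smul_mul_assoc, ← mul_assoc I Yμ Xμ, mul_assoc (I * Yμ) Xμ I,
          hXI, mul_one]
  set P : Module.End ℂ (CN N ⊗[ℂ] CN N) := TensorProduct.map I Yν with hPdef
  set Q : Module.End ℂ (CN N ⊗[ℂ] CN N) := TensorProduct.map Yμ 1 with hQdef
  have h𝕐 : 𝕐 = P + Q := rfl
  have h𝕏 : 𝕏 = TensorProduct.map Xμ Xν := rfl
  have hXP : 𝕏 * P = q ^ 2 • (P * 𝕏) := by
    rw [h𝕏, hPdef, ← TensorProduct.map_mul, ← TensorProduct.map_mul, hXI, hIX, hXYν,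
      TensorProduct.map_smul_right]
  have hXQ : 𝕏 * Q = q ^ 2 • (Q * 𝕏) := by
    rw [h𝕏, hQdef, ← TensorProduct.map_mul, ← TensorProduct.map_mul, mul_one, one_mul, hXYμ,
      TensorProduct.map_smul_left]
  have hcomm : 𝕏 * 𝕐 = q ^ 2 • (𝕐 * 𝕏) := by
    rw [h𝕐, mul_add, add_mul, hXP, hXQ, smul_add]
  have h𝕏N : 𝕏 ^ N = (u ^ N * u' ^ N) • 1 := by
    rw [h𝕏, TensorProduct.map_pow, hXμN, hXνN, TensorProduct.map_smul_left,
      TensorProduct.map_smul_right, TensorProduct.map_one, smul_smul]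
  have h𝕏u : IsUnit 𝕏 := by
    exact aux_isUnit_of_pow (R := Module.End ℂ (CN N ⊗[ℂ] CN N)) (n := N) (by omega)
      (mul_ne_zero (pow_ne_zero N hu) (pow_ne_zero N hu')) h𝕏N
  have hQN : Q ^ N = (v ^ N) • 1 := by
    rw [hQdef, TensorProduct.map_pow, hYμN, one_pow, TensorProduct.map_smul_left,
      TensorProduct.map_one]
  have hc : Commute I Xμ := by unfold Commute SemiconjBy; rw [hIX, hXI]
  have hIN : I ^ N = (u ^ N)⁻¹ • 1 := by
    have h1 : I ^ N * Xμ ^ N = 1 := by rw [← hc.mul_pow, hIX, one_pow]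
    have h2 : Xμ ^ N * ((u ^ N)⁻¹ • 1) = 1 := by
      rw [hXμN, smul_mul_smul_comm, mul_inv_cancel₀ (pow_ne_zero N hu), mul_one, one_smul]
    calc I ^ N = I ^ N * (Xμ ^ N * ((u ^ N)⁻¹ • 1)) := by rw [h2, mul_one]
    _ = (I ^ N * Xμ ^ N) * ((u ^ N)⁻¹ • 1) := by rw [mul_assoc]
    _ = (u ^ N)⁻¹ • 1 := by rw [h1, one_mul]
  have hPN : P ^ N = ((u ^ N)⁻¹ * v' ^ N) • 1 := by
    rw [hPdef, TensorProduct.map_pow, hIN, hYνN, TensorProduct.map_smul_left,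
      TensorProduct.map_smul_right, TensorProduct.map_one, smul_smul]
  have hQP : Q * P = q ^ 2 • (P * Q) := by
    rw [hPdef, hQdef, ← TensorProduct.map_mul, ← TensorProduct.map_mul, one_mul, mul_one, hYI,
      TensorProduct.map_smul_left]
  have hQu : IsUnit Q := by
    exact aux_isUnit_of_pow (R := Module.End ℂ (CN N ⊗[ℂ] CN N)) (n := N) (by omega)
      (pow_ne_zero N hv) hQN
  have h𝕐N : 𝕐 ^ N = ((u ^ N)⁻¹ * v' ^ N + v ^ N) • 1 := by
    have h1 : (Q + P) ^ N = Q ^ N + P ^ N := q_pow_add (R := Module.End ℂ (CN N ⊗[ℂ] CN N)) hN hq hQu hQP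
    rw [h𝕐, add_comm P Q, h1, hQN, hPN, ← add_smul, add_comm ((v : ℂ) ^ N)]
  refine ⟨hcomm, h𝕏u, h𝕏N, h𝕐N, fun hcne => ?_⟩
  have h𝕐u : IsUnit 𝕐 := by
    exact aux_isUnit_of_pow (R := Module.End ℂ (CN N ⊗[ℂ] CN N)) (n := N) (by omega) hcne h𝕐N
  exact ⟨h𝕐u, h𝕏u, h𝕐u, hcomm⟩

end
end

section
/- If (μ, ν) is a regular pair of standard Weyl pairs, then ℂ^N ⊗ ℂ^N decomposes as an internal direct sum of N subspaces W_1, …, W_N, each mapped into itself by X_μ⊗X_ν and by X_μ^{-1}⊗Y_ν + Y_μ⊗Id, and for each i there is a linear isomorphism ψ_i : ℂ^N → W_i satisfying ψ_i∘X_{μν} = (X_μ⊗X_ν)∘ψ_i and ψ_i∘Y_{μν} = (X_μ^{-1}⊗Y_ν + Y_μ⊗Id)∘ψ_i. -/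
open TensorProduct

noncomputable section

namespace Stmt7Aux

/-- diagonal operator with entries `((q^2)^k)⁻¹`. -/
def Dinv (q : ℂ) (N : ℕ) : Module.End ℂ (CN N) where
  toFun f := fun k => ((q ^ 2) ^ k.val)⁻¹ * f k
  map_add' f g := by funext k; simp [mul_add]
  map_smul' c f := by funext k; simp [smul_eq_mul]; ring

/-- twisted shift operator: `(opT ρ s f) k = ρ^((k+s).val) * f (k+s)`. -/
def opT (N : ℕ) (ρ : ℂ) (s : ZMod N) : Module.End ℂ (CN N) where
  toFun f := fun k => ρ ^ (k + s).val * f (k + s)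
  map_add' f g := by funext k; simp [mul_add]
  map_smul' c f := by funext k; simp [smul_eq_mul]; ring

/-- coordinate functional on the tensor product. -/
def coord (N : ℕ) (j k : ZMod N) : (CN N ⊗[ℂ] CN N) →ₗ[ℂ] ℂ :=
  TensorProduct.lift (LinearMap.mk₂ ℂ (fun f g => f j * g k)
    (fun f f' g => by simp [add_mul])
    (fun c f g => by simp [smul_eq_mul]; ring)
    (fun f g g' => by simp [mul_add])
    (fun c f g => by simp [smul_eq_mul]; ring))

@[simp] lemma coord_tmul (N : ℕ) (j k : ZMod N) (f g : CN N) :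
    coord N j k (f ⊗ₜ[ℂ] g) = f j * g k := rfl

/-- the intertwiner candidate. -/
def psiMap (N : ℕ) [NeZero N] (c : ZMod N → ℂ) (ρ : ℂ) (a : ZMod N) :
    CN N →ₗ[ℂ] (CN N ⊗[ℂ] CN N) :=
  ∑ j : ZMod N, c j •
    ((TensorProduct.mk ℂ (CN N) (CN N) (Pi.single j 1)).comp (opT N ρ (j - a)))

lemma psiMap_apply (N : ℕ) [NeZero N] (c : ZMod N → ℂ) (ρ : ℂ) (a : ZMod N) (f : CN N) :
    psiMap N c ρ a f = ∑ j : ZMod N, c j • (Pi.single j 1 ⊗ₜ[ℂ] opT N ρ (j - a) f) := by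
  simp [psiMap]

end Stmt7Aux

set_option maxHeartbeats 2000000 in
set_option synthInstance.maxHeartbeats 200000 in
/-- for a regular pair (μ, ν) of standard Weyl pairs, ℂ^N ⊗ ℂ^N is
an internal direct sum of N invariant subspaces, each equivariantly isomorphic
to ℂ^N with the Weyl pair μν (via X_{μν} ↦ X_μ⊗X_ν, Y_{μν} ↦ X_μ⁻¹⊗Y_ν + Y_μ⊗Id). -/
theorem stmt7 (N : ℕ) (hN : 1 ≤ N) (q : ℂ) (hq : IsPrimitiveRoot (q ^ 2) N)
    (u v u' v' u'' v'' : ℂ) (hu : u ≠ 0) (hv : v ≠ 0) (hu' : u' ≠ 0) (hv' : v' ≠ 0)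
    (hu'' : u'' ≠ 0) (hv'' : v'' ≠ 0)
    (hreg : (u ^ N)⁻¹ * v' ^ N + v ^ N ≠ 0)
    (hx : u'' ^ N = u ^ N * u' ^ N) (hy : v'' ^ N = (u ^ N)⁻¹ * v' ^ N + v ^ N) :
    let Xμν : Module.End ℂ (CN N) := u'' • opA q N
    let Yμν : Module.End ℂ (CN N) := v'' • opB N
    let 𝕏 : Module.End ℂ (CN N ⊗[ℂ] CN N) := TensorProduct.map (u • opA q N) (u' • opA q N)
    let 𝕐 : Module.End ℂ (CN N ⊗[ℂ] CN N) :=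
      TensorProduct.map (Ring.inverse (u • opA q N)) (v' • opB N) +
        TensorProduct.map (v • opB N) 1
    ∃ W : Fin N → Submodule ℂ (CN N ⊗[ℂ] CN N),
      DirectSum.IsInternal W ∧
      (∀ i, ∀ t ∈ W i, 𝕏 t ∈ W i ∧ 𝕐 t ∈ W i) ∧
      (∀ i, ∃ ψ : CN N ≃ₗ[ℂ] W i, ∀ w : CN N,
        ((ψ (Xμν w) : CN N ⊗[ℂ] CN N)) = 𝕏 (ψ w) ∧
        ((ψ (Yμν w) : CN N ⊗[ℂ] CN N)) = 𝕐 (ψ w)) := by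
  intro Xμν Yμν 𝕏 𝕐
  haveI : NeZero N := ⟨by omega⟩
  have hN0 : 0 < N := hN
  set q2 : ℂ := q ^ 2 with hq2def
  have hq2N : q2 ^ N = 1 := hq.pow_eq_one
  have hq2ne : q2 ≠ 0 := hq.ne_zero (by omega)
  have hmod : ∀ ζ : ℂ, ζ ^ N = 1 → ∀ m : ℕ, ζ ^ (m % N) = ζ ^ m := by
    intro ζ hζ m
    conv_rhs => rw [← Nat.div_add_mod m N]
    rw [pow_add, pow_mul, hζ, one_pow, one_mul]
  have hvadd : ∀ ζ : ℂ, ζ ^ N = 1 → ∀ x y : ZMod N,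
      ζ ^ (x + y).val = ζ ^ x.val * ζ ^ y.val := by
    intro ζ hζ x y
    rw [ZMod.val_add, hmod ζ hζ, pow_add]
  -- the shift a
  obtain ⟨a0, ha0N, ha0⟩ := hq.eq_pow_of_pow_eq_one
    (ξ := u'' * (u * u')⁻¹) (by
      rw [mul_pow, inv_pow, hx, mul_pow]
      field_simp)
  set a : ZMod N := (a0 : ZMod N) with hadef
  have haval : a.val = a0 := ZMod.val_cast_of_lt ha0N
  have ha : u'' = u * u' * q2 ^ a.val := by
    rw [haval, ha0]
    field_simp
  set w : ℂ := u⁻¹ * v' with hwdef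
  have hw : w ≠ 0 := mul_ne_zero (inv_ne_zero hu) hv'
  have hwN : w ^ N = (u ^ N)⁻¹ * v' ^ N := by rw [mul_pow, inv_pow]
  set qi : ℂ := q2⁻¹ with hqidef
  have hqiN : qi ^ N = 1 := by rw [hqidef, inv_pow, hq2N, inv_one]
  have hqiprim : IsPrimitiveRoot qi N := hq.inv
  set ρ : Fin N → ℂ := fun r => q2 ^ (r : ℕ) with hρdef
  have hρN : ∀ r, ρ r ^ N = 1 := fun r => by
    rw [hρdef]; rw [← pow_mul, mul_comm, pow_mul, hq2N, one_pow]
  have hρne : ∀ r, ρ r ≠ 0 := fun r => pow_ne_zero _ hq2ne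
  set t : Fin N → ℂ := fun r => v'' * (ρ r) ^ (1 : ZMod N).val with htdef
  have htN : ∀ r, t r ^ N = v'' ^ N := by
    intro r
    rw [htdef]
    simp only
    rw [mul_pow, ← pow_mul, mul_comm ((1 : ZMod N)).val N, pow_mul, hρN, one_pow, mul_one]
  have hvN_ne : v ^ N ≠ 0 := pow_ne_zero _ hv
  have hfac : ∀ (r : Fin N) (s : ℕ), t r - w * qi ^ s ≠ 0 := by
    intro r s h
    rw [sub_eq_zero] at h
    have h2 : t r ^ N = w ^ N := by
      rw [h, mul_pow, ← pow_mul, mul_comm s N, pow_mul, hqiN, one_pow, mul_one]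
    rw [htN r, hy, ← hwN] at h2
    exact hvN_ne (by linear_combination h2)
  -- product formula
  have hgen : ∀ x y : ℂ, ∏ i ∈ Finset.range N, (x - y * qi ^ i) = x ^ N - y ^ N := by
    intro x y
    rw [IsPrimitiveRoot.pow_sub_pow_eq_prod_sub_mul x y hN0 hqiprim]
    refine Finset.prod_bij (fun i _ => qi ^ i) ?_ ?_ ?_ ?_
    · intro i hi
      exact (Polynomial.mem_nthRootsFinset hN0 (1 : ℂ)).mpr
        (by rw [← pow_mul, mul_comm, pow_mul, hqiN, one_pow])
    · intro i hi i' hi' hii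
      exact hqiprim.pow_inj (Finset.mem_range.mp hi) (Finset.mem_range.mp hi') hii
    · intro b hb
      obtain ⟨i, hiN, hib⟩ := hqiprim.eq_pow_of_pow_eq_one
        ((Polynomial.mem_nthRootsFinset hN0 (1 : ℂ)).mp hb)
      exact ⟨i, Finset.mem_range.mpr hiN, hib⟩
    · intro i _; ring
  -- the eigenvector coefficients
  set c : Fin N → CN N :=
    fun r j => v ^ j.val * (∏ i ∈ Finset.range j.val, (t r - w * qi ^ (i + 1)))⁻¹ with hcdef
  have hPne : ∀ (r : Fin N) (n : ℕ),
      (∏ i ∈ Finset.range n, (t r - w * qi ^ (i + 1))) ≠ 0 :=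
    fun r n => Finset.prod_ne_zero_iff.mpr fun i _ => hfac r (i + 1)
  have hc0 : ∀ r, c r 0 = 1 := by
    intro r; simp [hcdef, ZMod.val_zero]
  have crec : ∀ (r : Fin N) (j : ZMod N),
      t r * c r j = w * (q2 ^ j.val)⁻¹ * c r j + v * c r (j - 1) := by
    intro r j
    have hwq : (q2 ^ j.val)⁻¹ = qi ^ j.val := by rw [hqidef, inv_pow]
    rw [hwq]
    rcases hval : j.val with _ | s
    · have hj0 : j = 0 := (ZMod.val_eq_zero j).mp hval
      subst hj0
      have hneg : (0 - 1 : ZMod N).val = N - 1 := by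
        have h1 : ((N - 1 : ℕ) : ZMod N) = 0 - 1 := by
          rw [Nat.cast_sub hN, ZMod.natCast_self, Nat.cast_one, zero_sub]
        rw [← h1, ZMod.val_cast_of_lt (by omega)]
      have hsucc : N - 1 + 1 = N := by omega
      have hPv : (t r - w) * (∏ i ∈ Finset.range (N - 1), (t r - w * qi ^ (i + 1))) = v ^ N := by
        have h1 := hgen (t r) w
        rw [htN r, hy, ← hwN] at h1
        have h2 : ∏ i ∈ Finset.range N, (t r - w * qi ^ i)
            = (∏ i ∈ Finset.range (N - 1), (t r - w * qi ^ (i + 1))) * (t r - w * qi ^ 0) := by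
          conv_lhs => rw [← hsucc]
          rw [Finset.prod_range_succ']
        rw [h2] at h1
        rw [pow_zero, mul_one] at h1
        linear_combination h1
      simp only [hcdef, ZMod.val_zero, hneg, pow_zero, Finset.range_zero, Finset.prod_empty,
        inv_one, mul_one, one_mul]
      have hP := hPne r (N - 1)
      have hvN : v ^ N = v * v ^ (N - 1) := by
        conv_lhs => rw [← hsucc]
        rw [pow_succ]; ring
      rw [hvN] at hPv
      field_simp
      linear_combination hPv
    · have hslt : s + 1 < N := by rw [← hval]; exact j.val_lt
      have hj1 : (j - 1).val = s := by
        have hjs : j = ((s + 1 : ℕ) : ZMod N) := by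
          rw [← hval, ZMod.natCast_val, ZMod.cast_id]
        have h2 : ((s + 1 : ℕ) : ZMod N) - 1 = ((s : ℕ) : ZMod N) := by push_cast; ring
        rw [hjs, h2, ZMod.val_cast_of_lt (by omega)]
      simp only [hcdef, hval, hj1]
      rw [Finset.prod_range_succ]
      have h1 := hPne r s
      have h2 := hfac r (s + 1)
      field_simp
      ring
  -- eigenvector independence
  set L : Module.End ℂ (CN N) := w • Stmt7Aux.Dinv q N + v • opB N with hLdef
  have hLc : ∀ r, L (c r) = t r • c r := by
    intro r
    funext j
    simp only [hLdef, LinearMap.add_apply, LinearMap.smul_apply, Pi.add_apply, Pi.smul_apply,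
      smul_eq_mul, Stmt7Aux.Dinv, opB, LinearMap.coe_mk, AddHom.coe_mk]
    have h := crec r j
    rw [← hq2def]
    linear_combination -h
  have hcne0 : ∀ r, c r ≠ 0 := by
    intro r h
    have := hc0 r
    rw [h] at this
    exact one_ne_zero this.symm
  have hinjt : Function.Injective t := by
    intro r s hrs
    by_cases hN1 : N = 1
    · subst hN1
      exact Subsingleton.elim r s
    · have h1 : (1 : ZMod N).val = 1 := ZMod.val_one'' hN1
      apply Fin.ext
      have h2 : q2 ^ (r : ℕ) = q2 ^ (s : ℕ) := by
        have h3 := mul_left_cancel₀ hv'' hrs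
        rw [h1, pow_one, pow_one] at h3
        exact h3
      exact hq.pow_inj r.isLt s.isLt h2
  have hindep : LinearIndependent ℂ c :=
    Module.End.eigenvectors_linearIndependent' L t hinjt c
      (fun r => ⟨Module.End.mem_eigenspace_iff.mpr (hLc r), hcne0 r⟩)
  -- operator lemmas
  have hTA : ∀ (ρx : ℂ) (s : ZMod N) (f : CN N),
      Stmt7Aux.opT N ρx s (opA q N f) = q2 ^ s.val • opA q N (Stmt7Aux.opT N ρx s f) := by
    intro ρx s f
    funext k
    simp only [Stmt7Aux.opT, opA, LinearMap.coe_mk, AddHom.coe_mk, Pi.smul_apply, smul_eq_mul]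
    rw [pow_mul, pow_mul, ← hq2def, hvadd q2 hq2N k s]
    ring
  have hTB : ∀ (r : Fin N) (s : ZMod N) (f : CN N),
      Stmt7Aux.opT N (ρ r) s (opB N f)
        = (ρ r) ^ (1 : ZMod N).val • opB N (Stmt7Aux.opT N (ρ r) s f) := by
    intro r s f
    funext k
    simp only [Stmt7Aux.opT, opB, LinearMap.coe_mk, AddHom.coe_mk, Pi.smul_apply, smul_eq_mul]
    rw [show k + s - 1 = k - 1 + s from by ring, show k + s = (k - 1 + s) + 1 from by ring,
      hvadd (ρ r) (hρN r)]
    ring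
  have hTshift : ∀ (ρx : ℂ) (s : ZMod N) (f : CN N),
      Stmt7Aux.opT N ρx (s - 1) f = opB N (Stmt7Aux.opT N ρx s f) := by
    intro ρx s f
    funext k
    simp only [Stmt7Aux.opT, opB, LinearMap.coe_mk, AddHom.coe_mk]
    rw [show k + (s - 1) = k - 1 + s from by ring]
  have hA_single : ∀ j : ZMod N, opA q N (Pi.single j 1) = q2 ^ j.val • (Pi.single j 1 : CN N) := by
    intro j
    funext k
    simp only [opA, LinearMap.coe_mk, AddHom.coe_mk, Pi.smul_apply, smul_eq_mul]
    by_cases hkj : k = j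
    · subst hkj; simp [pow_mul, ← hq2def]
    · simp [Pi.single_eq_of_ne hkj]
  have hB_single : ∀ j : ZMod N, opB N (Pi.single j 1) = (Pi.single (j + 1) 1 : CN N) := by
    intro j
    funext k
    simp only [opB, LinearMap.coe_mk, AddHom.coe_mk]
    by_cases hkj : k = j + 1
    · subst hkj
      rw [show j + 1 - 1 = j from by ring]
      simp
    · have h2 : k - 1 ≠ j := fun h => hkj (by rw [← h]; ring)
      simp [Pi.single_eq_of_ne h2, Pi.single_eq_of_ne hkj]
  have hD_single : ∀ j : ZMod N,
      Stmt7Aux.Dinv q N (Pi.single j 1) = (q2 ^ j.val)⁻¹ • (Pi.single j 1 : CN N) := by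
    intro j
    funext k
    simp only [Stmt7Aux.Dinv, LinearMap.coe_mk, AddHom.coe_mk, Pi.smul_apply, smul_eq_mul]
    by_cases hkj : k = j
    · subst hkj; simp [← hq2def]
    · simp [Pi.single_eq_of_ne hkj]
  have hq2k_ne : ∀ m : ℕ, q2 ^ m ≠ 0 := fun m => pow_ne_zero _ hq2ne
  have hRinv : Ring.inverse (u • opA q N) = u⁻¹ • Stmt7Aux.Dinv q N := by
    have h1 : (u • opA q N) * (u⁻¹ • Stmt7Aux.Dinv q N) = 1 := by
      apply LinearMap.ext; intro f; funext k
      simp only [Module.End.mul_apply, LinearMap.smul_apply, Pi.smul_apply, smul_eq_mul,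
        opA, Stmt7Aux.Dinv, LinearMap.coe_mk, AddHom.coe_mk, pow_mul]
      rw [← hq2def]
      field_simp
      try ring
      rfl
    have h2 : (u⁻¹ • Stmt7Aux.Dinv q N) * (u • opA q N) = 1 := by
      apply LinearMap.ext; intro f; funext k
      simp only [Module.End.mul_apply, LinearMap.smul_apply, Pi.smul_apply, smul_eq_mul,
        opA, Stmt7Aux.Dinv, LinearMap.coe_mk, AddHom.coe_mk, pow_mul]
      rw [← hq2def]
      field_simp
      try ring
      rfl
    rw [show (u • opA q N)
        = ((⟨u • opA q N, u⁻¹ • Stmt7Aux.Dinv q N, h1, h2⟩ : (Module.End ℂ (CN N))ˣ) :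
          Module.End ℂ (CN N)) from rfl, Ring.inverse_unit]
    rfl
  have hsplit : ∀ j : ZMod N, q2 ^ j.val = q2 ^ (j - a).val * q2 ^ a.val := by
    intro j
    conv_lhs => rw [show j = (j - a) + a from by ring]
    exact hvadd q2 hq2N _ _
  -- the intertwiners
  set Ψr : Fin N → (CN N →ₗ[ℂ] (CN N ⊗[ℂ] CN N)) :=
    fun r => Stmt7Aux.psiMap N (c r) (ρ r) a with hΨrdef
  have hpsiapp : ∀ (r : Fin N) (f : CN N),
      Ψr r f = ∑ j : ZMod N, c r j • (Pi.single j 1 ⊗ₜ[ℂ] Stmt7Aux.opT N (ρ r) (j - a) f) := by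
    intro r f
    rw [hΨrdef]
    exact Stmt7Aux.psiMap_apply N (c r) (ρ r) a f
  -- X intertwining
  have hXint : ∀ (r : Fin N) (f : CN N), Ψr r (Xμν f) = 𝕏 (Ψr r f) := by
    intro r f
    rw [hpsiapp, hpsiapp, map_sum]
    refine Finset.sum_congr rfl fun j _ => ?_
    have hXf : Xμν f = u'' • opA q N f := rfl
    have h1 : 𝕏 (c r j • (Pi.single j 1 ⊗ₜ[ℂ] Stmt7Aux.opT N (ρ r) (j - a) f))
        = c r j • (((u • opA q N) (Pi.single j 1)) ⊗ₜ[ℂ]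
            ((u' • opA q N) (Stmt7Aux.opT N (ρ r) (j - a) f))) := by
      rw [show 𝕏 (c r j • (Pi.single j 1 ⊗ₜ[ℂ] Stmt7Aux.opT N (ρ r) (j - a) f))
          = TensorProduct.map (u • opA q N) (u' • opA q N)
            (c r j • (Pi.single j 1 ⊗ₜ[ℂ] Stmt7Aux.opT N (ρ r) (j - a) f)) from rfl,
        map_smul, TensorProduct.map_tmul]
    rw [h1, hXf, map_smul, hTA (ρ r) (j - a) f, LinearMap.smul_apply, LinearMap.smul_apply,
      hA_single j]
    simp only [tmul_smul, ← TensorProduct.smul_tmul', smul_smul]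
    congr 1
    rw [ha, hsplit j]
    ring
  -- Y intertwining
  have hYint : ∀ (r : Fin N) (f : CN N), Ψr r (Yμν f) = 𝕐 (Ψr r f) := by
    intro r f
    have hL : Ψr r (Yμν f) = ∑ j : ZMod N,
        (c r j * t r) • (Pi.single j 1 ⊗ₜ[ℂ] opB N (Stmt7Aux.opT N (ρ r) (j - a) f)) := by
      rw [hpsiapp]
      refine Finset.sum_congr rfl fun j _ => ?_
      have hYf : Yμν f = v'' • opB N f := rfl
      rw [hYf, map_smul, hTB r (j - a) f]
      simp only [tmul_smul, smul_smul]
      try (congr 1; simp only [htdef]; ring)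
      rfl
    have h𝕐 : ∀ z : CN N ⊗[ℂ] CN N,
        𝕐 z = TensorProduct.map (Ring.inverse (u • opA q N)) (v' • opB N) z
          + TensorProduct.map (v • opB N) (1 : Module.End ℂ (CN N)) z := fun z => rfl
    have hS1 : TensorProduct.map (Ring.inverse (u • opA q N)) (v' • opB N) (Ψr r f)
        = ∑ j : ZMod N, (c r j * (w * (q2 ^ j.val)⁻¹))
            • (Pi.single j 1 ⊗ₜ[ℂ] opB N (Stmt7Aux.opT N (ρ r) (j - a) f)) := by
      rw [hpsiapp, map_sum]
      refine Finset.sum_congr rfl fun j _ => ?_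
      rw [map_smul, TensorProduct.map_tmul, hRinv, LinearMap.smul_apply,
        LinearMap.smul_apply, hD_single j]
      simp only [tmul_smul, ← TensorProduct.smul_tmul', smul_smul]
      congr 1
      simp only [hwdef]
      ring
    have hS2 : TensorProduct.map (v • opB N) (1 : Module.End ℂ (CN N)) (Ψr r f)
        = ∑ j : ZMod N, (c r (j - 1) * v)
            • (Pi.single j 1 ⊗ₜ[ℂ] opB N (Stmt7Aux.opT N (ρ r) (j - a) f)) := by
      rw [hpsiapp, map_sum]
      refine Fintype.sum_equiv (Equiv.addRight (1 : ZMod N)) _ _ fun j => ?_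
      simp only [Equiv.coe_addRight]
      rw [map_smul, TensorProduct.map_tmul, LinearMap.smul_apply, hB_single j,
        Module.End.one_apply]
      rw [show j + 1 - 1 = j from by ring, show j + 1 - a = (j - a) + 1 from by ring,
        ← hTshift (ρ r) ((j - a) + 1) f, show (j - a) + 1 - 1 = j - a from by ring]
      simp only [tmul_smul, ← TensorProduct.smul_tmul', smul_smul]
      try (congr 1; ring)
    rw [hL, h𝕐, hS1, hS2, ← Finset.sum_add_distrib]
    refine Finset.sum_congr rfl fun j _ => ?_
    rw [← add_smul]
    congr 1
    linear_combination crec r j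
  -- coordinates of Ψr
  have hcoord : ∀ (r : Fin N) (f : CN N) (j k : ZMod N),
      Stmt7Aux.coord N j k (Ψr r f)
        = c r j * ((ρ r) ^ ((k + (j - a)).val) * f (k + (j - a))) := by
    intro r f j k
    rw [hpsiapp, map_sum]
    rw [Finset.sum_eq_single j]
    · rw [map_smul, Stmt7Aux.coord_tmul, Pi.single_eq_same, one_mul, smul_eq_mul]
      rfl
    · intro j' _ hj'
      rw [map_smul, Stmt7Aux.coord_tmul, Pi.single_eq_of_ne (Ne.symm hj'), zero_mul, smul_zero]
    · intro h
      exact absurd (Finset.mem_univ j) h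
  -- the total map
  set Ψtot : (Fin N → CN N) →ₗ[ℂ] (CN N ⊗[ℂ] CN N) :=
    ∑ r : Fin N, (Ψr r).comp (LinearMap.proj r) with hΨtotdef
  have hΨtotapp : ∀ g : Fin N → CN N, Ψtot g = ∑ r : Fin N, Ψr r (g r) := by
    intro g
    rw [hΨtotdef]
    simp [LinearMap.sum_apply]
  have hΨsingle : ∀ (r : Fin N) (f : CN N), Ψtot (Pi.single r f) = Ψr r f := by
    intro r f
    rw [hΨtotapp]
    rw [Finset.sum_eq_single r]
    · rw [Pi.single_eq_same]
    · intro r' _ hr'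
      rw [Pi.single_eq_of_ne hr', map_zero]
    · intro h
      exact absurd (Finset.mem_univ r) h
  -- injectivity of Ψtot
  have hΨinj : Function.Injective Ψtot := by
    rw [injective_iff_map_eq_zero]
    intro g hg
    have hco2 : ∀ (m j : ZMod N), ∑ r : Fin N, ((ρ r) ^ m.val * g r m) * c r j = 0 := by
      intro m j
      have h1 := congrArg (Stmt7Aux.coord N j (m - (j - a))) hg
      rw [map_zero, hΨtotapp, map_sum] at h1
      rw [← h1]
      refine Finset.sum_congr rfl fun r _ => ?_
      rw [hcoord r (g r) j (m - (j - a)), sub_add_cancel]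
      ring
    have hvec : ∀ m : ZMod N, ∑ r : Fin N, ((ρ r) ^ m.val * g r m) • c r = 0 := by
      intro m
      funext j
      rw [Finset.sum_apply]
      simp only [Pi.smul_apply, smul_eq_mul, Pi.zero_apply]
      exact hco2 m j
    have hzero : ∀ (m : ZMod N) (r : Fin N), (ρ r) ^ m.val * g r m = 0 := by
      intro m r
      exact linearIndependent_iff'.mp hindep Finset.univ _ (hvec m) r (Finset.mem_univ r)
    funext r m
    have h3 := hzero m r
    have h4 : (ρ r) ^ m.val ≠ 0 := pow_ne_zero _ (hρne r)
    simpa [h4] using h3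
  -- surjectivity of Ψtot
  have hfr : Module.finrank ℂ (Fin N → CN N) = Module.finrank ℂ (CN N ⊗[ℂ] CN N) := by
    rw [Module.finrank_tensorProduct, Module.finrank_pi_fintype]
    simp [Module.finrank_fintype_fun_eq_card, ZMod.card]
  have hΨsurj : Function.Surjective Ψtot :=
    (LinearMap.injective_iff_surjective_of_finrank_eq_finrank hfr).mp hΨinj
  -- the ranges
  have hprinj : ∀ r : Fin N, Function.Injective (Ψr r) := by
    intro r f f' hff
    have h1 : Ψtot (Pi.single r f) = Ψtot (Pi.single r f') := by
      rw [hΨsingle, hΨsingle, hff]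
    have h2 := hΨinj h1
    have h3 := congrFun h2 r
    rwa [Pi.single_eq_same, Pi.single_eq_same] at h3
  set W : Fin N → Submodule ℂ (CN N ⊗[ℂ] CN N) := fun r => LinearMap.range (Ψr r) with hWdef
  set eqv : ∀ r : Fin N, CN N ≃ₗ[ℂ] ↥(W r) :=
    fun r => LinearEquiv.ofInjective (Ψr r) (hprinj r) with heqvdef
  have heqv_coe : ∀ (r : Fin N) (f : CN N), ((eqv r f : CN N ⊗[ℂ] CN N)) = Ψr r f := by
    intro r f
    rw [heqvdef]
    rfl
  refine ⟨W, ?_, ?_, ?_⟩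
  · -- internal direct sum
    have hco : DirectSum.coeLinearMap W
        = Ψtot ∘ₗ (((LinearEquiv.piCongrRight fun i => (eqv i).symm).toLinearMap) ∘ₗ
            (DirectSum.linearEquivFunOnFintype ℂ (Fin N) fun i => ↥(W i)).toLinearMap) := by
      refine DirectSum.linearMap_ext ℂ fun i => ?_
      apply LinearMap.ext
      intro x
      simp only [LinearMap.comp_apply, LinearEquiv.coe_coe]
      rw [DirectSum.lof_eq_of, DirectSum.coeLinearMap_of]
      rw [← DirectSum.lof_eq_of ℂ, DirectSum.linearEquivFunOnFintype_lof]
      have hsingle : (LinearEquiv.piCongrRight fun i => (eqv i).symm) (Pi.single i x)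
          = Pi.single i ((eqv i).symm x) := by
        funext j
        rw [LinearEquiv.piCongrRight_apply]
        by_cases hji : j = i
        · subst hji
          rw [Pi.single_eq_same, Pi.single_eq_same]
        · rw [Pi.single_eq_of_ne hji, Pi.single_eq_of_ne hji, (eqv j).symm.map_zero]
      rw [hsingle, hΨsingle]
      have h5 : Ψr i ((eqv i).symm x) = ((eqv i ((eqv i).symm x) : CN N ⊗[ℂ] CN N)) :=
        (heqv_coe i _).symm
      rw [h5, LinearEquiv.apply_symm_apply]
    have hbij : Function.Bijective (DirectSum.coeLinearMap W) := by
      rw [hco]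
      simp only [LinearMap.coe_comp, LinearEquiv.coe_coe]
      exact Function.Bijective.comp ⟨hΨinj, hΨsurj⟩
        (Function.Bijective.comp
          (LinearEquiv.piCongrRight fun i => (eqv i).symm).bijective
          (DirectSum.linearEquivFunOnFintype ℂ (Fin N) fun i => ↥(W i)).bijective)
    refine DirectSum.isInternal_submodule_of_iSupIndep_of_iSup_eq_top ?_ ?_
    · exact iSupIndep_of_dfinsupp_lsum_injective W hbij.injective
    · rw [← DirectSum.range_coeLinearMap]
      exact LinearMap.range_eq_top.mpr hbij.surjective
  · -- invariance
    intro i tt htt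
    obtain ⟨f, rfl⟩ := htt
    exact ⟨⟨Xμν f, hXint i f⟩, ⟨Yμν f, hYint i f⟩⟩
  · -- the equivariant isomorphisms
    intro i
    refine ⟨eqv i, fun f => ⟨?_, ?_⟩⟩
    · rw [heqv_coe, heqv_coe, hXint]
    · rw [heqv_coe, heqv_coe, hYint]


end
end

section
/- Let (X, Y, Z) be an irreducible triangle triple on a finite-dimensional complex vector space V. Then there exist nonzero complex numbers x, y, z, h with h^N = x·y·z such that X^N = x·Id_V, Y^N = y·Id_V, Z^N = z·Id_V and q^{-1}·XYZ = h·Id_V, and the dimension of V over ℂ is exactly N. -/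
open TensorProduct

noncomputable section

/-- A triangle triple: invertible endomorphisms with XY = q²YX, YZ = q²ZY, ZX = q²XZ. -/
def IsTriangleTriple (q : ℂ) {V : Type*} [AddCommMonoid V] [Module ℂ V]
    (X Y Z : Module.End ℂ V) : Prop :=
  IsUnit X ∧ IsUnit Y ∧ IsUnit Z ∧
    X * Y = q ^ 2 • (Y * X) ∧ Y * Z = q ^ 2 • (Z * Y) ∧ Z * X = q ^ 2 • (X * Z)

/-- A subspace invariant under X, Y and Z. -/
def TriangleInvariant {V : Type*} [AddCommMonoid V] [Module ℂ V]
    (X Y Z : Module.End ℂ V) (W : Submodule ℂ V) : Prop :=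
  (∀ v ∈ W, X v ∈ W) ∧ (∀ v ∈ W, Y v ∈ W) ∧ (∀ v ∈ W, Z v ∈ W)

/-- An irreducible triangle triple. -/
def IsIrreducibleTriangleTriple (q : ℂ) {V : Type*} [AddCommMonoid V] [Module ℂ V]
    (X Y Z : Module.End ℂ V) : Prop :=
  IsTriangleTriple q X Y Z ∧ Nontrivial V ∧
    ∀ W : Submodule ℂ V, TriangleInvariant X Y Z W → W = ⊥ ∨ W = ⊤

section Aux

variable {V : Type*} [AddCommGroup V] [Module ℂ V]

lemma pow_comm_left (c : ℂ) (A B : Module.End ℂ V) (hAB : A * B = c • (B * A)) (n : ℕ) :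
    A ^ n * B = c ^ n • (B * A ^ n) := by
  induction n with
  | zero => simp
  | succ n ih =>
    rw [pow_succ, mul_assoc, hAB, mul_smul_comm, ← mul_assoc, ih, smul_mul_assoc, smul_smul,
      mul_assoc, ← pow_succ']

lemma pow_comm_right (c : ℂ) (A B : Module.End ℂ V) (hAB : A * B = c • (B * A)) (n : ℕ) :
    A * B ^ n = c ^ n • (B ^ n * A) := by
  induction n with
  | zero => simp
  | succ n ih =>
    rw [pow_succ', ← mul_assoc, hAB, smul_mul_assoc, mul_assoc, ih, mul_smul_comm, smul_smul,
      ← mul_assoc, ← pow_succ', pow_succ]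

lemma pow_mul_pow_aux (q : ℂ) (Y Z : Module.End ℂ V) (hYZ : Y * Z = q ^ 2 • (Z * Y)) (n : ℕ) :
    Y ^ n * Z ^ n = q ^ (n * (n - 1)) • (Y * Z) ^ n := by
  induction n with
  | zero => simp
  | succ n ih =>
    have hA : Y * (Y * Z) = q ^ 2 • ((Y * Z) * Y) := by
      conv_lhs => rw [hYZ]
      rw [mul_smul_comm, ← mul_assoc]
    have h2 : Y * (Y * Z) ^ n = (q ^ 2) ^ n • ((Y * Z) ^ n * Y) := pow_comm_right _ _ _ hA n
    have harith : n * (n - 1) + 2 * n = (n + 1) * n := by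
      cases n with
      | zero => rfl
      | succ m => simp [Nat.succ_sub_one]; ring
    calc Y ^ (n + 1) * Z ^ (n + 1) = Y * (Y ^ n * Z ^ n) * Z := by
          rw [pow_succ', pow_succ, mul_assoc, mul_assoc, mul_assoc]
      _ = q ^ (n * (n - 1)) • (Y * (Y * Z) ^ n * Z) := by
          rw [ih, mul_smul_comm, smul_mul_assoc]
      _ = q ^ (n * (n - 1)) • ((q ^ 2) ^ n • (((Y * Z) ^ n * Y) * Z)) := by
          rw [h2, smul_mul_assoc]
      _ = q ^ ((n + 1) * n) • ((Y * Z) ^ (n + 1)) := by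
          rw [smul_smul, ← pow_mul, ← pow_add, harith, pow_succ, mul_assoc]

lemma schur_aux (q : ℂ) {W : Type*} [AddCommGroup W] [Module ℂ W] [FiniteDimensional ℂ W]
    (X Y Z : Module.End ℂ W) (h : IsIrreducibleTriangleTriple q X Y Z)
    (T : Module.End ℂ W) (hTX : T * X = X * T) (hTY : T * Y = Y * T) (hTZ : T * Z = Z * T) :
    ∃ c : ℂ, T = c • 1 := by
  haveI : Nontrivial W := h.2.1
  obtain ⟨μ, hμ⟩ := Module.End.exists_eigenvalue T
  refine ⟨μ, ?_⟩
  have hcomm : ∀ (S : Module.End ℂ W), T * S = S * T →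
      ∀ v ∈ Module.End.eigenspace T μ, S v ∈ Module.End.eigenspace T μ := by
    intro S hS v hv
    rw [Module.End.mem_eigenspace_iff] at hv ⊢
    have := congrArg (fun f : Module.End ℂ W => f v) hS
    simp only [Module.End.mul_apply] at this
    rw [this, hv, map_smul]
  have := h.2.2 (Module.End.eigenspace T μ) ⟨hcomm X hTX, hcomm Y hTY, hcomm Z hTZ⟩
  rcases this with h' | h'
  · exact absurd h' hμ
  · ext v
    have hv : v ∈ Module.End.eigenspace T μ := h' ▸ Submodule.mem_top
    simpa [Module.End.mem_eigenspace_iff] using hv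

end Aux
/-- an irreducible triangle triple has scalar N-th powers
X^N = x·Id, Y^N = y·Id, Z^N = z·Id, central element q⁻¹XYZ = h·Id with
h^N = xyz, and the underlying space has dimension N. -/
theorem stmt13 (N : ℕ) (hN : 1 ≤ N) (q : ℂ)
    (hqN : q ^ N = (-1 : ℂ) ^ (N + 1)) (hq : IsPrimitiveRoot (q ^ 2) N)
    (V : Type*) [AddCommGroup V] [Module ℂ V] [FiniteDimensional ℂ V]
    (X Y Z : Module.End ℂ V) (h : IsIrreducibleTriangleTriple q X Y Z) :
    ∃ x y z h' : ℂ, x ≠ 0 ∧ y ≠ 0 ∧ z ≠ 0 ∧ h' ≠ 0 ∧ h' ^ N = x * y * z ∧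
      X ^ N = x • (1 : Module.End ℂ V) ∧ Y ^ N = y • (1 : Module.End ℂ V) ∧
      Z ^ N = z • (1 : Module.End ℂ V) ∧
      q⁻¹ • (X * Y * Z) = h' • (1 : Module.End ℂ V) ∧
      Module.finrank ℂ V = N := by
  obtain ⟨⟨hXu, hYu, hZu, hxy, hyz, hzx⟩, hnt, hirr⟩ := h
  haveI : Nontrivial V := hnt
  haveI : NeZero N := ⟨by omega⟩
  have hq0 : q ≠ 0 := by
    intro hq0
    rw [hq0, zero_pow (by omega)] at hqN
    exact (by norm_num : ((-1:ℂ)) ^ (N+1) ≠ 0) hqN.symm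
  have hq2N : (q ^ 2) ^ N = 1 := hq.pow_eq_one
  have scalar_inj : ∀ a b : ℂ, a • (1 : Module.End ℂ V) = b • 1 → a = b := by
    intro a b hab
    obtain ⟨v, hv⟩ := exists_ne (0 : V)
    have h1 := congrArg (fun f : Module.End ℂ V => f v) hab
    simp only [LinearMap.smul_apply, Module.End.one_apply] at h1
    have h2 : (a - b) • v = 0 := by rw [sub_smul, h1, sub_self]
    rcases smul_eq_zero.1 h2 with h3 | h3
    · exact sub_eq_zero.1 h3
    · exact absurd h3 hv
  have scalar_ne : ∀ (T : Module.End ℂ V) (c : ℂ), IsUnit T → T = c • 1 → c ≠ 0 := by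
    intro T c hT hTc hc0
    rw [hc0, zero_smul] at hTc
    rw [hTc] at hT
    obtain ⟨v, hv⟩ := exists_ne (0 : V)
    obtain ⟨w, hw⟩ := ((Module.End.isUnit_iff _).1 hT).2 v
    simp only [LinearMap.zero_apply] at hw
    exact hv hw.symm
  -- scalar N-th powers via Schur
  obtain ⟨x, hX⟩ := schur_aux q X Y Z ⟨⟨hXu, hYu, hZu, hxy, hyz, hzx⟩, hnt, hirr⟩ (X ^ N)
    (by rw [← pow_succ, ← pow_succ'])
    (by rw [pow_comm_left (q^2) X Y hxy N, hq2N, one_smul])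
    (by rw [pow_comm_right (q^2) Z X hzx N, hq2N, one_smul])
  obtain ⟨y, hY⟩ := schur_aux q X Y Z ⟨⟨hXu, hYu, hZu, hxy, hyz, hzx⟩, hnt, hirr⟩ (Y ^ N)
    (by rw [pow_comm_right (q^2) X Y hxy N, hq2N, one_smul])
    (by rw [← pow_succ, ← pow_succ'])
    (by rw [pow_comm_left (q^2) Y Z hyz N, hq2N, one_smul])
  obtain ⟨z, hZ⟩ := schur_aux q X Y Z ⟨⟨hXu, hYu, hZu, hxy, hyz, hzx⟩, hnt, hirr⟩ (Z ^ N)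
    (by rw [pow_comm_left (q^2) Z X hzx N, hq2N, one_smul])
    (by rw [pow_comm_right (q^2) Y Z hyz N, hq2N, one_smul])
    (by rw [← pow_succ, ← pow_succ'])
  have hx0 : x ≠ 0 := scalar_ne _ _ (hXu.pow N) hX
  have hy0 : y ≠ 0 := scalar_ne _ _ (hYu.pow N) hY
  have hz0 : z ≠ 0 := scalar_ne _ _ (hZu.pow N) hZ
  -- X commutes with Y*Z
  have hXYZ : X * (Y * Z) = (Y * Z) * X := by
    calc X * (Y * Z) = (X * Y) * Z := (mul_assoc _ _ _).symm
      _ = q ^ 2 • ((Y * X) * Z) := by rw [hxy, smul_mul_assoc]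
      _ = q ^ 2 • (Y * (X * Z)) := by rw [mul_assoc]
      _ = Y * (q ^ 2 • (X * Z)) := (mul_smul_comm _ _ _).symm
      _ = Y * (Z * X) := by rw [← hzx]
      _ = (Y * Z) * X := (mul_assoc _ _ _).symm
  -- Z commutes with X*Y
  have hZXY : Z * (X * Y) = (X * Y) * Z := by
    calc Z * (X * Y) = (Z * X) * Y := (mul_assoc _ _ _).symm
      _ = q ^ 2 • (X * (Z * Y)) := by rw [hzx, smul_mul_assoc, mul_assoc]
      _ = X * (q ^ 2 • (Z * Y)) := (mul_smul_comm _ _ _).symm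
      _ = X * (Y * Z) := by rw [← hyz]
      _ = (X * Y) * Z := (mul_assoc _ _ _).symm
  have hq2ne : (q : ℂ) ^ 2 ≠ 0 := pow_ne_zero _ hq0
  -- X*Y*Z commutes with X, Y, Z
  have hH_X : (X * Y * Z) * X = X * (X * Y * Z) := by
    rw [mul_assoc X Y Z, mul_assoc, hXYZ, ← mul_assoc]
  have hH_Y : (X * Y * Z) * Y = Y * (X * Y * Z) := by
    apply smul_right_injective (Module.End ℂ V) hq2ne
    calc q ^ 2 • ((X * Y * Z) * Y) = (X * Y) * (q ^ 2 • (Z * Y)) := by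
          rw [mul_assoc (X*Y) Z Y, mul_smul_comm]
      _ = ((X * Y) * Y) * Z := by rw [← hyz, ← mul_assoc, mul_assoc (X*Y) Y Z]
      _ = ((q ^ 2 • (Y * X)) * Y) * Z := by rw [← hxy]
      _ = q ^ 2 • (Y * (X * Y * Z)) := by
          rw [smul_mul_assoc, smul_mul_assoc, mul_assoc Y X Y, mul_assoc Y (X*Y) Z]
  have hH_Z : (X * Y * Z) * Z = Z * (X * Y * Z) := by
    calc (X * Y * Z) * Z = (Z * (X * Y)) * Z := by rw [hZXY]
      _ = Z * (X * Y * Z) := by rw [mul_assoc]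
  obtain ⟨h'', hH⟩ := schur_aux q X Y Z ⟨⟨hXu, hYu, hZu, hxy, hyz, hzx⟩, hnt, hirr⟩ (X * Y * Z)
    hH_X hH_Y hH_Z
  have hh0 : h'' ≠ 0 := scalar_ne _ _ ((hXu.mul hYu).mul hZu) hH
  refine ⟨x, y, z, q⁻¹ * h'', hx0, hy0, hz0, mul_ne_zero (inv_ne_zero hq0) hh0, ?_, hX, hY, hZ,
    by rw [hH, smul_smul], ?_⟩
  -- h'^N = x*y*z
  · have hYZN : Y ^ N * Z ^ N = q ^ (N * (N - 1)) • (Y * Z) ^ N := pow_mul_pow_aux q Y Z hyz N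
    have hXYZN : (X * Y * Z) ^ N = X ^ N * (Y * Z) ^ N := by
      rw [mul_assoc, (Commute.mul_pow hXYZ N : _)]
    have e1 : (h'' ^ N) • (1 : Module.End ℂ V) = (X * Y * Z) ^ N := by
      rw [hH, smul_pow, one_pow]
    have key : (q ^ (N * (N - 1)) * h'' ^ N) • (1 : Module.End ℂ V) = (x * y * z) • 1 := by
      calc (q ^ (N * (N - 1)) * h'' ^ N) • (1 : Module.End ℂ V)
          = q ^ (N * (N - 1)) • ((h'' ^ N) • (1 : Module.End ℂ V)) := by rw [smul_smul]
        _ = X ^ N * (q ^ (N * (N - 1)) • (Y * Z) ^ N) := by rw [e1, hXYZN, mul_smul_comm]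
        _ = X ^ N * (Y ^ N * Z ^ N) := by rw [← hYZN]
        _ = (x • 1) * ((y • 1) * ((z • (1 : Module.End ℂ V)))) := by rw [hX, hY, hZ]
        _ = (x * (y * z)) • 1 := by
            simp only [smul_mul_assoc, mul_smul_comm, smul_smul, one_mul, mul_one]
            ring_nf
        _ = (x * y * z) • 1 := by rw [mul_assoc]
    have key2 : q ^ (N * (N - 1)) * h'' ^ N = x * y * z := scalar_inj _ _ key
    have harith : N + N * (N - 1) = N * N := by
      cases N with
      | zero => rfl
      | succ m => simp [Nat.succ_sub_one]; ring
    have hNN : q ^ (N * N) = 1 := by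
      rw [pow_mul, hqN, ← pow_mul]
      exact Even.neg_one_pow (by rw [mul_comm]; exact Nat.even_mul_succ_self N)
    have hinv : (q ^ N)⁻¹ = q ^ (N * (N - 1)) :=
      inv_eq_of_mul_eq_one_right (by rw [← pow_add, harith, hNN])
    rw [mul_pow, inv_pow, hinv, key2]
  -- dimension
  · obtain ⟨μ, hμ⟩ := Module.End.exists_eigenvalue X
    obtain ⟨v, hv⟩ := hμ.exists_hasEigenvector
    have hvne : v ≠ 0 := hv.2
    have hXv : X v = μ • v := hv.apply_eq_smul
    have hYNv : ∀ w : V, (Y ^ N) w = y • w := fun w => by rw [hY]; simp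
    have hμ0 : μ ≠ 0 := by
      intro h0
      have hXv0 : X v = 0 := by rw [hXv, h0, zero_smul]
      have h1 : (X ^ N) v = 0 := by
        have h2 : X ^ N = X ^ (N - 1) * X := by rw [← pow_succ, Nat.sub_add_cancel hN]
        rw [h2, Module.End.mul_apply, hXv0, map_zero]
      rw [hX] at h1
      simp only [LinearMap.smul_apply, Module.End.one_apply] at h1
      rcases smul_eq_zero.1 h1 with h3 | h3
      · exact hx0 h3
      · exact hvne h3
    set f : Fin N → V := fun k => (Y ^ (k : ℕ)) v with hf
    have hfe : ∀ k : Fin N, X (f k) = ((q ^ 2) ^ (k : ℕ) * μ) • f k := by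
      intro k
      have h1 := congrArg (fun T : Module.End ℂ V => T v) (pow_comm_right (q^2) X Y hxy (k : ℕ))
      simp only [Module.End.mul_apply, LinearMap.smul_apply] at h1
      rw [hf]
      simp only []
      rw [h1, hXv, map_smul, smul_smul]
    have hfne : ∀ k : Fin N, f k ≠ 0 := by
      intro k hk0
      have hinj : Function.Injective (Y ^ (k : ℕ) : Module.End ℂ V) :=
        ((Module.End.isUnit_iff _).1 (hYu.pow _)).1
      exact hvne (hinj (by simpa using hk0))
    have heig : ∀ k : Fin N, X.HasEigenvector ((q ^ 2) ^ (k : ℕ) * μ) (f k) := fun k =>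
      ⟨Module.End.mem_eigenspace_iff.2 (hfe k), hfne k⟩
    have hμinj : Function.Injective (fun k : Fin N => (q ^ 2) ^ (k : ℕ) * μ) := by
      intro k l hkl
      simp only [] at hkl
      exact Fin.ext (hq.pow_inj k.isLt l.isLt (mul_right_cancel₀ hμ0 hkl))
    have hli : LinearIndependent ℂ f := Module.End.eigenvectors_linearIndependent' X _ hμinj f heig
    have hge : N ≤ Module.finrank ℂ V := by simpa using hli.fintype_card_le_finrank
    set W := Submodule.span ℂ (Set.range f) with hW
    have hmem : ∀ m : ℕ, (Y ^ m) v ∈ W := by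
      intro m
      induction m using Nat.strong_induction_on with
      | _ m ih =>
        by_cases hm : m < N
        · exact Submodule.subset_span ⟨⟨m, hm⟩, rfl⟩
        · push_neg at hm
          have h1 : m - N + N = m := Nat.sub_add_cancel hm
          have h2 : (Y ^ m) v = y • (Y ^ (m - N)) v := by
            conv_lhs => rw [← h1]
            rw [pow_add, Module.End.mul_apply, hYNv, map_smul]
          rw [h2]
          exact Submodule.smul_mem _ _ (ih (m - N) (by omega))
    have hZv : Z v = (h'' / (y * μ)) • (Y ^ (N - 1)) v := by
      have hinj : Function.Injective (X * Y : Module.End ℂ V) :=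
        ((Module.End.isUnit_iff _).1 (hXu.mul hYu)).1
      apply hinj
      have lhs : (X * Y) (Z v) = h'' • v := by
        have h1 := congrArg (fun T : Module.End ℂ V => T v) hH
        simp only [Module.End.mul_apply, LinearMap.smul_apply, Module.End.one_apply] at h1
        simpa [Module.End.mul_apply] using h1
      have rhs : (X * Y) ((Y ^ (N - 1)) v) = (y * μ) • v := by
        have h1 : Y ((Y ^ (N - 1)) v) = y • v := by
          rw [← Module.End.mul_apply, ← pow_succ', Nat.sub_add_cancel hN, hYNv]
        rw [Module.End.mul_apply, h1, map_smul, hXv, smul_smul]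
      rw [lhs, map_smul, rhs, smul_smul, div_mul_cancel₀ _ (mul_ne_zero hy0 hμ0)]
    have inv_of_gen : ∀ (T : Module.End ℂ V), (∀ k : Fin N, T (f k) ∈ W) →
        ∀ u ∈ W, T u ∈ W := by
      intro T hT u hu
      have hle : W ≤ W.comap T := Submodule.span_le.2 (by rintro s ⟨k, rfl⟩; exact hT k)
      exact hle hu
    have hWX : ∀ u ∈ W, X u ∈ W := by
      refine inv_of_gen X fun k => ?_
      rw [hfe k]
      exact Submodule.smul_mem _ _ (Submodule.subset_span ⟨k, rfl⟩)
    have hWY : ∀ u ∈ W, Y u ∈ W := by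
      refine inv_of_gen Y fun k => ?_
      have : Y (f k) = (Y ^ ((k : ℕ) + 1)) v := by
        rw [hf]; simp only []; rw [← Module.End.mul_apply, ← pow_succ']
      rw [this]; exact hmem _
    have hWZ : ∀ u ∈ W, Z u ∈ W := by
      refine inv_of_gen Z fun k => ?_
      have h3 : (Y ^ (k : ℕ)) (Z v) ∈ W := by
        rw [hZv, map_smul, ← Module.End.mul_apply, ← pow_add]
        exact Submodule.smul_mem _ _ (hmem _)
      have h4 : Z (f k) = ((q ^ 2) ^ (k : ℕ))⁻¹ • ((Y ^ (k : ℕ)) (Z v)) := by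
        have h1 := congrArg (fun T : Module.End ℂ V => T v) (pow_comm_left (q^2) Y Z hyz (k : ℕ))
        simp only [Module.End.mul_apply, LinearMap.smul_apply] at h1
        rw [hf]; simp only []
        rw [h1, smul_smul, inv_mul_cancel₀ (pow_ne_zero _ hq2ne), one_smul]
      rw [h4]
      exact Submodule.smul_mem _ _ h3
    have hWtop : W = ⊤ := by
      rcases hirr W ⟨hWX, hWY, hWZ⟩ with hbot | htop
      · exfalso
        have hvW : v ∈ W := by
          have h5 : f ⟨0, by omega⟩ = v := by rw [hf]; simp
          exact h5 ▸ Submodule.subset_span ⟨_, rfl⟩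
        rw [hbot] at hvW
        exact hvne ((Submodule.mem_bot ℂ).1 hvW)
      · exact htop
    have hle' : Module.finrank ℂ V ≤ N := by
      simpa using finrank_le_of_span_eq_top hWtop
    omega

end
end

section
/- Let (X, Y, Z) be an irreducible triangle triple on a finite-dimensional complex vector space V, with X^N = x·Id, Y^N = y·Id, Z^N = z·Id and q^{-1}·XYZ = h·Id for nonzero complex numbers x, y, z, h satisfying h^N = x·y·z. Then for all complex numbers u, v, w with u^N = x, v^N = y, w^N = z and u·v·w = h, there exists a linear isomorphism φ : V → ℂ^N such that φ∘X = (uA)∘φ, φ∘Y = (vB)∘φ and φ∘Z = (wC)∘φ. -/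
open TensorProduct

noncomputable section

/-- an irreducible triangle triple with parameters (x, y, z, h) is
isomorphic to the standard triple (uA, vB, wC) for any N-th roots u, v, w of
x, y, z with u·v·w = h. -/
theorem stmt14 (N : ℕ) (hN : 1 ≤ N) (q : ℂ)
    (hqN : q ^ N = (-1 : ℂ) ^ (N + 1)) (hq : IsPrimitiveRoot (q ^ 2) N)
    (V : Type*) [AddCommGroup V] [Module ℂ V] [FiniteDimensional ℂ V]
    (X Y Z : Module.End ℂ V) (h : IsIrreducibleTriangleTriple q X Y Z)
    (x y z h' : ℂ) (hx : x ≠ 0) (hy : y ≠ 0) (hz : z ≠ 0) (hh : h' ≠ 0)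
    (hN' : h' ^ N = x * y * z)
    (hX : X ^ N = x • (1 : Module.End ℂ V)) (hY : Y ^ N = y • (1 : Module.End ℂ V))
    (hZ : Z ^ N = z • (1 : Module.End ℂ V))
    (hH : q⁻¹ • (X * Y * Z) = h' • (1 : Module.End ℂ V)) :
    ∀ u v w : ℂ, u ^ N = x → v ^ N = y → w ^ N = z → u * v * w = h' →
      ∃ φ : V ≃ₗ[ℂ] CN N, ∀ t : V,
        φ (X t) = (u • opA q N) (φ t) ∧ φ (Y t) = (v • opB N) (φ t) ∧
        φ (Z t) = (w • opC q N) (φ t) := by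
  intro u v w huN hvN hwN huvw
  haveI : NeZero N := ⟨by omega⟩
  obtain ⟨⟨hXu, hYu, hZu, hXY, hYZ, hZX⟩, hnt, hirr⟩ := h
  haveI : Nontrivial V := hnt
  have hNne : N ≠ 0 := by omega
  have hu : u ≠ 0 := fun h0 => hx (by rw [← huN, h0, zero_pow hNne])
  have hv : v ≠ 0 := fun h0 => hy (by rw [← hvN, h0, zero_pow hNne])
  have hw : w ≠ 0 := fun h0 => hz (by rw [← hwN, h0, zero_pow hNne])
  have hq0 : q ≠ 0 := by
    intro h0
    rw [h0, zero_pow hNne] at hqN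
    exact pow_ne_zero _ (by norm_num : (-1:ℂ) ≠ 0) hqN.symm
  have hq2N : (q ^ 2) ^ N = 1 := hq.pow_eq_one
  -- commutation of X with powers of Y
  have hcomm : ∀ m : ℕ, X * Y ^ m = ((q ^ 2) ^ m) • (Y ^ m * X) := by
    intro m
    induction m with
    | zero => simp
    | succ m ih =>
      calc X * Y ^ (m + 1) = (X * Y ^ m) * Y := by rw [pow_succ, mul_assoc]
        _ = (q ^ 2) ^ m • (Y ^ m * X * Y) := by rw [ih, smul_mul_assoc]
        _ = (q ^ 2) ^ m • (Y ^ m * (q ^ 2 • (Y * X))) := by rw [mul_assoc, hXY]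
        _ = ((q ^ 2) ^ m * q ^ 2) • ((Y ^ m * Y) * X) := by
            rw [mul_smul_comm, smul_smul, mul_assoc]
        _ = (q ^ 2) ^ (m + 1) • (Y ^ (m + 1) * X) := by rw [← pow_succ, ← pow_succ]
  -- find an eigenvector of X with eigenvalue u
  obtain ⟨μ, hμ⟩ := Module.End.exists_eigenvalue X
  obtain ⟨ev, hev⟩ := hμ.exists_hasEigenvector
  have hev0 : ev ≠ 0 := hev.right
  have hμN : μ ^ N = x := by
    have h1 := hev.pow_apply N
    rw [hX] at h1
    have h1' : x • ev = μ ^ N • ev := by simpa using h1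
    have h2 : (μ ^ N - x) • ev = 0 := by
      rw [sub_smul, ← h1', sub_self]
    rcases smul_eq_zero.mp h2 with h3 | h3
    · exact (sub_eq_zero.mp h3)
    · exact absurd h3 hev0
  have hμu : (μ * u⁻¹) ^ N = 1 := by
    rw [mul_pow, hμN, inv_pow, huN, mul_inv_cancel₀ hx]
  obtain ⟨i, hiN, hi⟩ := hq.eq_pow_of_pow_eq_one hμu
  have hμeq : μ = u * (q ^ 2) ^ i := by
    rw [hi]; field_simp
  set v0 : V := (Y ^ (N - i)) ev with hv0def
  have hYpinj : ∀ m : ℕ, Function.Injective (Y ^ m : Module.End ℂ V) := by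
    intro m
    exact ((Module.End.isUnit_iff _).mp (hYu.pow m)).injective
  have hv00 : v0 ≠ 0 := by
    intro h0
    exact hev0 (hYpinj (N - i) (by simpa using h0))
  have hXv0 : X v0 = u • v0 := by
    have h1 : (X * Y ^ (N - i)) ev = ((q ^ 2) ^ (N - i)) • (Y ^ (N - i)) (X ev) := by
      rw [hcomm]
      simp [LinearMap.smul_apply, Module.End.mul_apply]
    rw [Module.End.mul_apply] at h1
    rw [hv0def, h1, hev.apply_eq_smul, map_smul, smul_smul, hμeq]
    congr 1
    rw [show (q ^ 2) ^ (N - i) * (u * (q ^ 2) ^ i) = u * ((q ^ 2) ^ (N - i) * (q ^ 2) ^ i) by ring,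
      ← pow_add, Nat.sub_add_cancel (le_of_lt hiN), hq2N, mul_one]
  -- the candidate basis vectors
  set W : ℕ → V := fun m => (v⁻¹) ^ m • (Y ^ m) v0 with hWdef
  have hYW : ∀ m : ℕ, Y (W m) = v • W (m + 1) := by
    intro m
    have h1 : Y ((Y ^ m) v0) = (Y ^ (m + 1)) v0 := by
      rw [pow_succ', Module.End.mul_apply]
    simp only [hWdef, map_smul, h1, smul_smul]
    congr 1
    field_simp
    rw [one_div, pow_succ, mul_left_comm, mul_inv_cancel₀ hv, mul_one]
  have hXW : ∀ m : ℕ, X (W m) = (u * (q ^ 2) ^ m) • W m := by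
    intro m
    have h1 : X ((Y ^ m) v0) = (q ^ 2) ^ m • (Y ^ m) (X v0) := by
      have := congrArg (fun f : Module.End ℂ V => f v0) (hcomm m)
      simpa [Module.End.mul_apply] using this
    simp only [hWdef, map_smul, h1, hXv0, smul_smul]
    congr 1
    ring
  have hWper : ∀ m : ℕ, W (m + N) = W m := by
    intro m
    have h1 : (Y ^ (m + N)) v0 = y • (Y ^ m) v0 := by
      rw [pow_add, Module.End.mul_apply, hY]
      simp [map_smul]
    simp only [hWdef, h1, smul_smul]
    congr 1
    rw [← hvN]
    field_simp
    rw [one_div, pow_add, mul_assoc, ← mul_pow, inv_mul_cancel₀ hv, one_pow, mul_one]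
  have hWadd : ∀ t m : ℕ, W (m + N * t) = W m := by
    intro t
    induction t with
    | zero => intro m; simp
    | succ t ih =>
      intro m
      have : m + N * (t + 1) = (m + N) + N * t := by ring
      rw [this, ih, hWper]
  have hWmod : ∀ a b : ℕ, a % N = b % N → W a = W b := by
    intro a b hab
    have h1 : W a = W (a % N) := by
      conv_lhs => rw [← Nat.mod_add_div a N]
      exact hWadd _ _
    have h2 : W b = W (b % N) := by
      conv_lhs => rw [← Nat.mod_add_div b N]
      exact hWadd _ _
    rw [h1, h2, hab]
  have hWcast : ∀ a b : ℕ, ((a : ZMod N) = (b : ZMod N)) → W a = W b := fun a b hab =>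
    hWmod a b ((ZMod.natCast_eq_natCast_iff' a b N).mp hab)
  have hvalcast : ∀ k : ZMod N, ((k.val : ℕ) : ZMod N) = k := fun k =>
    ZMod.natCast_rightInverse k
  set e : ZMod N → V := fun k => W k.val with hedef
  have hXe : ∀ k : ZMod N, X (e k) = (u * q ^ (2 * k.val)) • e k := by
    intro k
    rw [hedef, hXW, pow_mul]
  have hYe : ∀ k : ZMod N, Y (e k) = v • e (k + 1) := by
    intro k
    have h1 : W ((k + 1).val) = W (k.val + 1) := by
      apply hWcast
      push_cast [hvalcast]
      ring
    show Y (W k.val) = v • W ((k + 1).val)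
    rw [h1, hYW]
  have he0 : ∀ k : ZMod N, e k ≠ 0 := by
    intro k h0
    rw [hedef] at h0
    dsimp only at h0
    rw [hWdef] at h0
    rcases smul_eq_zero.mp h0 with h1 | h1
    · exact pow_ne_zero _ (inv_ne_zero hv) h1
    · exact hv00 (hYpinj _ (by simpa using h1))
  -- Z action on the basis
  have hXYZ : X * Y * Z = (q * h') • (1 : Module.End ℂ V) := by
    have h1 := congrArg (fun f : Module.End ℂ V => q • f) hH
    simpa [smul_smul, mul_inv_cancel₀ hq0] using h1
  have hZe : ∀ k : ZMod N,
      Z (e k) = (w * q ^ ((1 : ℤ) - 2 * (k.val : ℤ))) • e (k - 1) := by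
    intro k
    have hXYinj : Function.Injective (X * Y : Module.End ℂ V) :=
      ((Module.End.isUnit_iff _).mp (hXu.mul hYu)).injective
    apply hXYinj
    have hL : (X * Y) (Z (e k)) = (q * h') • e k := by
      have := congrArg (fun f : Module.End ℂ V => f (e k)) hXYZ
      simpa [Module.End.mul_apply] using this
    have hk1 : (k - 1) + 1 = k := by ring
    have hR : (X * Y) ((w * q ^ ((1 : ℤ) - 2 * (k.val : ℤ))) • e (k - 1))
        = ((w * q ^ ((1 : ℤ) - 2 * (k.val : ℤ))) * (v * (u * q ^ (2 * k.val)))) • e k := by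
      rw [map_smul, Module.End.mul_apply, hYe, hk1, map_smul, hXe, smul_smul, smul_smul]
      congr 1
      ring
    rw [hL, hR]
    congr 1
    have hnpow : (q : ℂ) ^ (2 * k.val) = q ^ ((2 * (k.val : ℤ))) := by
      rw [← zpow_natCast]
      norm_num
    have e1 : q ^ ((1 : ℤ) - 2 * (k.val : ℤ)) * q ^ (2 * (k.val : ℤ)) = q := by
      rw [← zpow_add₀ hq0, show (1 : ℤ) - 2 * (k.val : ℤ) + 2 * (k.val : ℤ) = 1 by ring,
        zpow_one]
    rw [hnpow, ← huvw]
    linear_combination (-(u * v * w)) * e1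
  -- linear independence
  have hli : LinearIndependent ℂ e := by
    apply X.eigenvectors_linearIndependent' (fun k : ZMod N => u * q ^ (2 * k.val))
    · intro a b hab
      have h1 : (q ^ 2) ^ a.val = (q ^ 2) ^ b.val := by
        have := mul_left_cancel₀ hu hab
        rw [← pow_mul, ← pow_mul]
        exact this
      have h2 : a.val = b.val := hq.pow_inj (ZMod.val_lt a) (ZMod.val_lt b) h1
      rw [← hvalcast a, ← hvalcast b, h2]
    · intro k
      exact ⟨Module.End.mem_eigenspace_iff.mpr (hXe k), he0 k⟩
  -- spanning
  set S : Submodule ℂ V := Submodule.span ℂ (Set.range e) with hSdef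
  have hmem : ∀ k : ZMod N, e k ∈ S := fun k => Submodule.subset_span ⟨k, rfl⟩
  have hSX : ∀ t ∈ S, X t ∈ S := by
    intro t ht
    induction ht using Submodule.span_induction with
    | mem a ha => obtain ⟨k, rfl⟩ := ha; rw [hXe k]; exact S.smul_mem _ (hmem k)
    | zero => simp
    | add a b _ _ ha hb => rw [map_add]; exact S.add_mem ha hb
    | smul c a _ ha => rw [map_smul]; exact S.smul_mem _ ha
  have hSY : ∀ t ∈ S, Y t ∈ S := by
    intro t ht
    induction ht using Submodule.span_induction with
    | mem a ha => obtain ⟨k, rfl⟩ := ha; rw [hYe k]; exact S.smul_mem _ (hmem _)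
    | zero => simp
    | add a b _ _ ha hb => rw [map_add]; exact S.add_mem ha hb
    | smul c a _ ha => rw [map_smul]; exact S.smul_mem _ ha
  have hSZ : ∀ t ∈ S, Z t ∈ S := by
    intro t ht
    induction ht using Submodule.span_induction with
    | mem a ha => obtain ⟨k, rfl⟩ := ha; rw [hZe k]; exact S.smul_mem _ (hmem _)
    | zero => simp
    | add a b _ _ ha hb => rw [map_add]; exact S.add_mem ha hb
    | smul c a _ ha => rw [map_smul]; exact S.smul_mem _ ha
  have hStop : S = ⊤ := by
    rcases hirr S ⟨hSX, hSY, hSZ⟩ with h0 | ht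
    · exfalso
      have := hmem 0
      rw [h0, Submodule.mem_bot] at this
      exact he0 0 this
    · exact ht
  -- the basis and the isomorphism
  let b : Module.Basis (ZMod N) ℂ V := Module.Basis.mk hli (by rw [← hSdef, hStop])
  have hb : ∀ k : ZMod N, b k = e k := fun k => Module.Basis.mk_apply hli _ k
  have hbe : ∀ (k j : ZMod N), b.equivFun (e k) j = if k = j then 1 else 0 := by
    intro k j
    rw [← hb k]
    exact b.equivFun_self k j
  refine ⟨b.equivFun, fun t => ?_⟩
  have key : ∀ (F : Module.End ℂ V) (G : Module.End ℂ (CN N)),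
      (∀ k : ZMod N, b.equivFun (F (e k)) = G (b.equivFun (e k))) →
      b.equivFun (F t) = G (b.equivFun t) := by
    intro F G hFG
    have : (b.equivFun.toLinearMap ∘ₗ F) = (G ∘ₗ b.equivFun.toLinearMap) := by
      apply b.ext
      intro k
      simp only [LinearMap.comp_apply, LinearEquiv.coe_coe, hb k]
      exact hFG k
    exact congrArg (fun f : V →ₗ[ℂ] CN N => f t) this
  -- q-exponent congruence lemma
  have hq2z : ∀ c : ℤ, ((c : ZMod N) = 0) → (q : ℂ) ^ (2 * c) = 1 := by
    intro c hc
    have hdvd : (N : ℤ) ∣ c := (ZMod.intCast_zmod_eq_zero_iff_dvd c N).mp hc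
    have : (q ^ 2 : ℂ) ^ c = 1 := (hq.zpow_eq_one_iff_dvd c).mpr hdvd
    rw [zpow_mul, show ((2:ℤ)) = ((2:ℕ):ℤ) from rfl, zpow_natCast]
    exact this
  refine ⟨?_, ?_, ?_⟩
  · apply key
    intro k
    rw [hXe k, map_smul]
    funext j
    simp only [LinearMap.smul_apply, opA, LinearMap.coe_mk, AddHom.coe_mk, Pi.smul_apply, smul_eq_mul, hbe]
    by_cases hkj : k = j
    · subst hkj; rw [if_pos rfl]; ring
    · rw [if_neg hkj]; ring
  · apply key
    intro k
    rw [hYe k, map_smul]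
    funext j
    simp only [LinearMap.smul_apply, opB, LinearMap.coe_mk, AddHom.coe_mk, Pi.smul_apply, smul_eq_mul, hbe]
    have hiff : (k + 1 = j) ↔ (k = j - 1) := by
      constructor
      · intro h1; rw [← h1]; ring
      · intro h1; rw [h1]; ring
    by_cases hkj : k + 1 = j
    · rw [if_pos hkj, if_pos (hiff.mp hkj)]
    · rw [if_neg hkj, if_neg (fun h1 => hkj (hiff.mpr h1))]
  · apply key
    intro k
    rw [hZe k, map_smul]
    funext j
    simp only [LinearMap.smul_apply, opC, LinearMap.coe_mk, AddHom.coe_mk, Pi.smul_apply, smul_eq_mul, hbe]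
    by_cases hkj : k - 1 = j
    · have hkj' : k = j + 1 := by rw [← hkj]; ring
      rw [if_pos hkj, if_pos hkj', mul_one, mul_one]
      have hc : (((1 : ℤ) - (k.val : ℤ) + (j.val : ℤ) : ℤ) : ZMod N) = 0 := by
        push_cast [hvalcast]
        rw [hkj']
        ring
      rw [show (1 : ℤ) - 2 * (k.val : ℤ)
          = (-1 - 2 * (j.val : ℤ)) + 2 * ((1 : ℤ) - (k.val : ℤ) + (j.val : ℤ)) by ring,
        zpow_add₀ hq0, hq2z _ hc, mul_one]
    · have hkj' : ¬ (k = j + 1) := fun hc => hkj (by rw [hc]; ring)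
      rw [if_neg hkj, if_neg hkj']
      ring

end
end

section
/- For all nonzero complex numbers u, v, w, the triple (uA, vB, wC) is a triangle triple on ℂ^N: the three operators are invertible and satisfy (uA)(vB) = q^2·(vB)(uA), (vB)(wC) = q^2·(wC)(vB), (wC)(uA) = q^2·(uA)(wC); moreover (uA)^N = u^N·Id, (vB)^N = v^N·Id, (wC)^N = w^N·Id and q^{-1}·(uA)(vB)(wC) = (u·v·w)·Id; and the triple is irreducible, i.e. the only subspaces of ℂ^N mapped into themselves by uA, vB and wC are 0 and ℂ^N. -/
open TensorProduct

noncomputable section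

namespace Stmt15Aux

variable {N : ℕ} {q : ℂ}

lemma hq2pow (hN : 1 ≤ N) (hqN : q ^ N = (-1 : ℂ) ^ (N + 1)) : (q^2)^N = 1 := by
  rw [← pow_mul, mul_comm, pow_mul, hqN, ← pow_mul, mul_comm (N+1) 2, pow_mul]
  norm_num

lemma hqne (hN : 1 ≤ N) (hqN : q ^ N = (-1 : ℂ) ^ (N + 1)) : q ≠ 0 := by
  intro h
  rw [h, zero_pow (by omega)] at hqN
  exact (by simp : ((-1:ℂ)^(N+1)) ≠ 0) hqN.symm

lemma hq2step (hN : 1 ≤ N) (h2N : (q^2)^N = 1) (k : ZMod N) :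
    (q^2) ^ ((k+1).val) = q^2 * (q^2)^(k.val) := by
  haveI : NeZero N := ⟨by omega⟩
  rcases eq_or_lt_of_le hN with h1 | h1
  · have hq2 : q^2 = 1 := by rw [← h2N, ← h1, pow_one]
    simp [hq2]
  · haveI : Fact (1 < N) := ⟨h1⟩
    rw [ZMod.val_add, ZMod.val_one, ← pow_eq_pow_mod _ h2N, pow_add, pow_one, mul_comm]

/-- the scalar in opC -/
def cc (q : ℂ) (N : ℕ) (k : ZMod N) : ℂ := q ^ (-1 - 2 * (k.val : ℤ))

lemma cc_eq (hq0 : q ≠ 0) (k : ZMod N) : cc q N k = (q * (q^2)^(k.val))⁻¹ := by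
  unfold cc
  rw [show (-1 - 2*(k.val:ℤ)) = -(((1 + 2*k.val : ℕ)):ℤ) by push_cast; ring,
    zpow_neg, zpow_natCast, pow_add, pow_one, pow_mul]

lemma opA_apply (f : CN N) (k : ZMod N) : opA q N f k = (q^2)^(k.val) * f k := by
  simp [opA, pow_mul]

lemma opB_apply (f : CN N) (k : ZMod N) : opB N f k = f (k - 1) := rfl

lemma opC_apply (f : CN N) (k : ZMod N) : opC q N f k = cc q N k * f (k + 1) := rfl

lemma opA_pow (n : ℕ) (f : CN N) (k : ZMod N) :
    ((opA q N)^n) f k = ((q^2)^(k.val))^n * f k := by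
  induction n generalizing f with
  | zero => simp
  | succ n ih =>
      rw [pow_succ', Module.End.mul_apply, opA_apply, ih f]
      ring

lemma opB_pow (n : ℕ) (f : CN N) (k : ZMod N) :
    ((opB N)^n) f k = f (k - n) := by
  induction n generalizing f with
  | zero => simp
  | succ n ih =>
      rw [pow_succ, Module.End.mul_apply, ih (opB N f), opB_apply]
      push_cast
      ring_nf

lemma opC_pow (n : ℕ) (f : CN N) (k : ZMod N) :
    ((opC q N)^n) f k = (∏ j ∈ Finset.range n, cc q N (k + j)) * f (k + n) := by
  induction n generalizing f with
  | zero => simp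
  | succ n ih =>
      rw [pow_succ, Module.End.mul_apply, ih (opC q N f), Finset.prod_range_succ, opC_apply]
      push_cast
      ring_nf


lemma opA_pow_N (h2N : (q^2)^N = 1) : (opA q N)^N = 1 := by
  apply LinearMap.ext; intro f; funext k
  rw [opA_pow, ← pow_mul, mul_comm (ZMod.val k) N, pow_mul, h2N, one_pow, one_mul]
  rfl

lemma opB_pow_N (hN : 1 ≤ N) : (opB N)^N = 1 := by
  apply LinearMap.ext; intro f; funext k
  rw [opB_pow, ZMod.natCast_self, sub_zero]
  rfl

lemma prod_cc [NeZero N] (k : ZMod N) :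
    (∏ j ∈ Finset.range N, cc q N (k + j)) = ∏ m : ZMod N, cc q N m := by
  refine Finset.prod_nbij' (fun j => k + (j : ZMod N)) (fun m => (m - k).val) ?_ ?_ ?_ ?_ ?_
  · intro a _; exact Finset.mem_univ _
  · intro m _; exact Finset.mem_range.2 (ZMod.val_lt _)
  · intro a ha
    rw [add_sub_cancel_left, ZMod.val_natCast_of_lt (Finset.mem_range.1 ha)]
  · intro m _
    rw [ZMod.natCast_val, ZMod.cast_id, add_sub_cancel]
  · intro a _; rfl

lemma sum_val [NeZero N] : (∑ m : ZMod N, m.val) = ∑ i ∈ Finset.range N, i := by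
  refine Finset.sum_nbij' (fun m => m.val) (fun i => (i : ZMod N)) ?_ ?_ ?_ ?_ ?_
  · intro m _; exact Finset.mem_range.2 (ZMod.val_lt _)
  · intro a _; exact Finset.mem_univ _
  · intro m _; rw [ZMod.natCast_val, ZMod.cast_id]
  · intro a ha; rw [ZMod.val_natCast_of_lt (Finset.mem_range.1 ha)]
  · intro a _; rfl

lemma prod_cc_univ [NeZero N] (hN : 1 ≤ N) (hqN : q ^ N = (-1 : ℂ) ^ (N + 1)) :
    (∏ m : ZMod N, cc q N m) = 1 := by
  have hq0 := hqne hN hqN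
  have key : (∏ m : ZMod N, (q * (q^2)^(m.val))) = 1 := by
    rw [Finset.prod_mul_distrib, Finset.prod_const, Finset.prod_pow_eq_pow_sum, sum_val,
      Finset.card_univ, ZMod.card, ← pow_mul]
    have h2 : 2 * ∑ i ∈ Finset.range N, i = N * (N - 1) := by
      rw [mul_comm, Finset.sum_range_id_mul_two]
    rw [h2, ← pow_add]
    have h3 : N + N * (N - 1) = N * N := by
      cases N with
      | zero => simp
      | succ n => simp [Nat.succ_sub_one, Nat.mul_succ]; ring
    rw [h3, pow_mul, hqN, ← pow_mul]
    exact Even.neg_one_pow (by rw [mul_comm]; exact (Nat.even_mul_succ_self N))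
  calc (∏ m : ZMod N, cc q N m) = (∏ m : ZMod N, (q * (q^2)^(m.val)))⁻¹ := by
        rw [← Finset.prod_inv_distrib]
        exact Finset.prod_congr rfl fun m _ => cc_eq hq0 m
    _ = 1 := by rw [key, inv_one]

lemma opC_pow_N (hN : 1 ≤ N) (hqN : q ^ N = (-1 : ℂ) ^ (N + 1)) : (opC q N)^N = 1 := by
  haveI : NeZero N := ⟨by omega⟩
  apply LinearMap.ext; intro f; funext k
  rw [opC_pow, prod_cc, prod_cc_univ hN hqN, one_mul, ZMod.natCast_self, add_zero]
  rfl


lemma cc_step (hN : 1 ≤ N) (hq0 : q ≠ 0) (h2N : (q^2)^N = 1) (k : ZMod N) :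
    cc q N (k - 1) = q^2 * cc q N k := by
  have h := hq2step hN h2N (k - 1)
  rw [sub_add_cancel] at h
  rw [cc_eq hq0, cc_eq hq0, h]
  have h1 : (q:ℂ) ^ 2 ≠ 0 := pow_ne_zero _ hq0
  have h2 : ((q:ℂ)^2) ^ (k-1).val ≠ 0 := pow_ne_zero _ h1
  field_simp

lemma rel_AB (hN : 1 ≤ N) (h2N : (q^2)^N = 1) :
    opA q N * opB N = q^2 • (opB N * opA q N) := by
  apply LinearMap.ext; intro f; funext k
  have h := hq2step hN h2N (k - 1)
  rw [sub_add_cancel] at h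
  simp only [Module.End.mul_apply, LinearMap.smul_apply, Pi.smul_apply, smul_eq_mul,
    opA_apply, opB_apply]
  rw [h]; ring

lemma rel_BC (hN : 1 ≤ N) (hq0 : q ≠ 0) (h2N : (q^2)^N = 1) :
    opB N * opC q N = q^2 • (opC q N * opB N) := by
  apply LinearMap.ext; intro f; funext k
  simp only [Module.End.mul_apply, LinearMap.smul_apply, Pi.smul_apply, smul_eq_mul,
    opB_apply, opC_apply]
  rw [cc_step hN hq0 h2N, sub_add_cancel, add_sub_cancel_right]
  ring

lemma rel_CA (hN : 1 ≤ N) (h2N : (q^2)^N = 1) :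
    opC q N * opA q N = q^2 • (opA q N * opC q N) := by
  apply LinearMap.ext; intro f; funext k
  simp only [Module.End.mul_apply, LinearMap.smul_apply, Pi.smul_apply, smul_eq_mul,
    opA_apply, opC_apply]
  rw [hq2step hN h2N k]
  ring

lemma scale_rel {V : Type*} [AddCommGroup V] [Module ℂ V] {X Y : Module.End ℂ V}
    {c x y : ℂ} (h : X * Y = c • (Y * X)) :
    (x • X) * (y • Y) = c • ((y • Y) * (x • X)) := by
  rw [smul_mul_assoc, mul_smul_comm, h, smul_mul_assoc, mul_smul_comm,
    smul_smul, smul_smul, smul_smul, smul_smul]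
  congr 1; ring

lemma isUnit_smul_of_pow {V : Type*} [AddCommGroup V] [Module ℂ V] (hN : 1 ≤ N)
    {X : Module.End ℂ V} (hX : X ^ N = 1) {x : ℂ} (hx : x ≠ 0) : IsUnit (x • X) := by
  refine ⟨⟨x • X, x⁻¹ • X^(N-1), ?_, ?_⟩, rfl⟩
  · rw [smul_mul_assoc, mul_smul_comm, smul_smul, mul_inv_cancel₀ hx, one_smul,
      ← pow_succ', Nat.sub_add_cancel hN, hX]
  · rw [smul_mul_assoc, mul_smul_comm, smul_smul, inv_mul_cancel₀ hx, one_smul,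
      ← pow_succ, Nat.sub_add_cancel hN, hX]

lemma irred (hN : 1 ≤ N) (hqN : q ^ N = (-1 : ℂ) ^ (N + 1))
    (hq : IsPrimitiveRoot (q ^ 2) N) (W : Submodule ℂ (CN N))
    (hWA : ∀ g ∈ W, opA q N g ∈ W) (hWB : ∀ g ∈ W, opB N g ∈ W) :
    W = ⊥ ∨ W = ⊤ := by
  haveI : NeZero N := ⟨by omega⟩
  by_cases hbot : W = ⊥
  · exact Or.inl hbot
  right
  obtain ⟨f, hfW, hf0⟩ := Submodule.exists_mem_ne_zero_of_ne_bot hbot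
  have hkex : ∃ k, f k ≠ 0 := by
    by_contra hk; push_neg at hk
    exact hf0 (funext fun m => hk m)
  obtain ⟨k, hk⟩ := hkex
  have poly : ∀ s : Finset (ZMod N),
      (fun m => (∏ j ∈ s, ((q^2)^(m.val) - (q^2)^(j.val))) * f m) ∈ W := by
    intro s
    induction s using Finset.induction_on with
    | empty => simpa using hfW
    | @insert j s hj ih =>
        have heq : (fun m => (∏ i ∈ insert j s, ((q^2)^(m.val) - (q^2)^(i.val))) * f m)
            = opA q N (fun m => (∏ i ∈ s, ((q^2)^(m.val) - (q^2)^(i.val))) * f m)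
              - ((q^2)^(j.val)) • (fun m => (∏ i ∈ s, ((q^2)^(m.val) - (q^2)^(i.val))) * f m) := by
          funext m
          simp only [Pi.sub_apply, Pi.smul_apply, smul_eq_mul, opA_apply,
            Finset.prod_insert hj]
          ring
        rw [heq]
        exact W.sub_mem (hWA _ ih) (W.smul_mem _ ih)
  set c0 : ℂ := ∏ j ∈ Finset.univ.erase k, ((q^2)^(k.val) - (q^2)^(j.val)) with hc0
  have hc0ne : c0 ≠ 0 := by
    rw [hc0]
    apply Finset.prod_ne_zero_iff.2
    intro j hj
    have hjk : j ≠ k := Finset.ne_of_mem_erase hj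
    refine sub_ne_zero.2 fun h => hjk ?_
    exact (ZMod.val_injective N (hq.pow_inj (ZMod.val_lt k) (ZMod.val_lt j) h)).symm
  have hsingle : Pi.single k (c0 * f k) ∈ W := by
    have heq : (fun m => (∏ j ∈ Finset.univ.erase k, ((q^2)^(m.val) - (q^2)^(j.val))) * f m)
        = Pi.single k (c0 * f k) := by
      funext m
      by_cases hm : m = k
      · subst hm; simp [hc0]
      · have hz : (∏ j ∈ Finset.univ.erase k, ((q^2)^(m.val) - (q^2)^(j.val))) = 0 :=
          Finset.prod_eq_zero (Finset.mem_erase.2 ⟨hm, Finset.mem_univ m⟩) (sub_self _)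
        rw [hz, zero_mul, Pi.single_eq_of_ne hm]
    rw [← heq]; exact poly _
  have hss : ∀ (a : ℂ) (i : ZMod N) (b : ℂ), a • (Pi.single i b : CN N) = Pi.single i (a * b) := by
    intro a i b; funext j
    simp [Pi.single_apply, mul_ite]
  have h1W : Pi.single k 1 ∈ W := by
    have hcf : c0 * f k ≠ 0 := mul_ne_zero hc0ne hk
    have h2 := W.smul_mem (c0 * f k)⁻¹ hsingle
    rwa [hss, inv_mul_cancel₀ hcf] at h2
  have hBsingle : ∀ m : ZMod N, opB N (Pi.single m 1) = Pi.single (m + 1) (1:ℂ) := by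
    intro m; funext j
    rw [opB_apply]
    simp [Pi.single_apply, sub_eq_iff_eq_add]
  have hall : ∀ n : ℕ, Pi.single (k + (n : ZMod N)) (1:ℂ) ∈ W := by
    intro n; induction n with
    | zero => simpa using h1W
    | succ n ih =>
        have h2 := hWB _ ih
        rw [hBsingle] at h2
        have hcast : k + (((n+1) : ℕ) : ZMod N) = k + (n : ZMod N) + 1 := by
          push_cast; ring
        rw [hcast]; exact h2
  have hallm : ∀ m : ZMod N, Pi.single m (1:ℂ) ∈ W := by
    intro m
    have h2 := hall ((m - k).val)
    rwa [ZMod.natCast_val, ZMod.cast_id, add_sub_cancel] at h2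
  rw [eq_top_iff]
  intro g _
  have hg : g = ∑ m : ZMod N, Pi.single m (g m) := (Finset.univ_sum_single g).symm
  rw [hg]
  refine W.sum_mem fun m _ => ?_
  rw [show Pi.single m (g m) = (g m) • (Pi.single m (1:ℂ) : CN N) by rw [hss, mul_one]]
  exact W.smul_mem _ (hallm m)

end Stmt15Aux

/-- for nonzero u, v, w, the triple (uA, vB, wC) is an irreducible
triangle triple on ℂ^N with (uA)^N = u^N·Id, (vB)^N = v^N·Id, (wC)^N = w^N·Id
and q⁻¹(uA)(vB)(wC) = uvw·Id. -/
theorem stmt15 (N : ℕ) (hN : 1 ≤ N) (q : ℂ)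
    (hqN : q ^ N = (-1 : ℂ) ^ (N + 1)) (hq : IsPrimitiveRoot (q ^ 2) N)
    (u v w : ℂ) (hu : u ≠ 0) (hv : v ≠ 0) (hw : w ≠ 0) :
    IsIrreducibleTriangleTriple q (u • opA q N) (v • opB N) (w • opC q N) ∧
    (u • opA q N) ^ N = (u ^ N) • (1 : Module.End ℂ (CN N)) ∧
    (v • opB N) ^ N = (v ^ N) • (1 : Module.End ℂ (CN N)) ∧
    (w • opC q N) ^ N = (w ^ N) • (1 : Module.End ℂ (CN N)) ∧
    q⁻¹ • (u • opA q N * (v • opB N) * (w • opC q N)) =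
      (u * v * w) • (1 : Module.End ℂ (CN N)) := by
  haveI : NeZero N := ⟨by omega⟩
  have hq0 : q ≠ 0 := Stmt15Aux.hqne hN hqN
  have h2N : (q^2)^N = 1 := Stmt15Aux.hq2pow hN hqN
  have hAN : (opA q N)^N = 1 := Stmt15Aux.opA_pow_N h2N
  have hBN : (opB N)^N = 1 := Stmt15Aux.opB_pow_N hN
  have hCNN : (opC q N)^N = 1 := Stmt15Aux.opC_pow_N hN hqN
  refine ⟨⟨⟨?_, ?_, ?_, ?_, ?_, ?_⟩, ?_, ?_⟩, ?_, ?_, ?_, ?_⟩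
  · exact Stmt15Aux.isUnit_smul_of_pow hN hAN hu
  · exact Stmt15Aux.isUnit_smul_of_pow hN hBN hv
  · exact Stmt15Aux.isUnit_smul_of_pow hN hCNN hw
  · exact Stmt15Aux.scale_rel (Stmt15Aux.rel_AB hN h2N)
  · exact Stmt15Aux.scale_rel (Stmt15Aux.rel_BC hN hq0 h2N)
  · exact Stmt15Aux.scale_rel (Stmt15Aux.rel_CA hN h2N)
  · exact ⟨0, (fun _ => 1), fun h => by simpa using congrFun h 0⟩
  · intro W hW
    obtain ⟨hW1, hW2, _⟩ := hW
    apply Stmt15Aux.irred hN hqN hq W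
    · intro g hg
      have h1 : opA q N g = u⁻¹ • ((u • opA q N) g) := by
        rw [LinearMap.smul_apply, smul_smul, inv_mul_cancel₀ hu, one_smul]
      rw [h1]
      exact W.smul_mem _ (hW1 g hg)
    · intro g hg
      have h1 : opB N g = v⁻¹ • ((v • opB N) g) := by
        rw [LinearMap.smul_apply, smul_smul, inv_mul_cancel₀ hv, one_smul]
      rw [h1]
      exact W.smul_mem _ (hW2 g hg)
  · rw [smul_pow, hAN]
  · rw [smul_pow, hBN]
  · rw [smul_pow, hCNN]
  · apply LinearMap.ext; intro f; funext k
    have h := Stmt15Aux.hq2step hN h2N (k - 1)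
    rw [sub_add_cancel] at h
    simp only [Module.End.mul_apply, LinearMap.smul_apply, Pi.smul_apply, smul_eq_mul,
      Stmt15Aux.opA_apply, Stmt15Aux.opB_apply, Stmt15Aux.opC_apply, Module.End.one_apply]
    rw [sub_add_cancel, Stmt15Aux.cc_eq hq0, h]
    have h1 : (q:ℂ) ^ 2 ≠ 0 := pow_ne_zero _ hq0
    have h2 : ((q:ℂ)^2) ^ (k-1).val ≠ 0 := pow_ne_zero _ h1
    field_simp

end
end
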